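/- arXiv:1608.06170 — 6 statements merged into one kernel-verified Lean document; each statement's English description precedes it below -/
import Mathlib

section
/- Let n ≥ 3 and let p, q be nonnegative integers with (p,q) ≠ (0,0). Let A be an n×n 0-1 matrix such that f(A(i)) ≤ (n−1)(n−2)/2 − p(n−1)/2 − q for every i ∈ {1,…,n} (an inequality of rational numbers). Then f(A) ≤ n(n−1)/2 − p(n+1)/2 − q − 1. -/
/-- A 0-1 matrix: all entries in {0,1}. -/
def isZeroOne {n : ℕ} (A : Matrix (Fin n) (Fin n) ℕ) : Prop :=
  ∀ i j, A i j = 0 ∨ A i j = 1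

/-- `f(A)`: the number of entries of `A` equal to one. -/
def fOnes {m n : ℕ} (A : Matrix (Fin m) (Fin n) ℕ) : ℕ :=
  (Finset.univ.filter (fun p : Fin m × Fin n => A p.1 p.2 = 1)).card

/-- The strictly increasing map `Fin (n-1) → Fin n` skipping the index `i`;
`A.submatrix (delMap i) (delMap i)` is the principal submatrix `A(i)` obtained
from `A` by deleting its `i`-th row and column. -/
def delMap {n : ℕ} (i : Fin n) (j : Fin (n - 1)) : Fin n :=
  if h : (j : ℕ) < (i : ℕ) then ⟨j, h.trans i.isLt⟩
  else ⟨(j : ℕ) + 1, by have := j.isLt; omega⟩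

lemma delMap_ne {n : ℕ} (i : Fin n) (j : Fin (n - 1)) : delMap i j ≠ i := by
  unfold delMap
  split <;> (intro h; apply_fun Fin.val at h; simp at h; omega)

lemma delMap_inj {n : ℕ} (i : Fin n) : Function.Injective (delMap i) := by
  intro a b h
  unfold delMap at h
  apply Fin.ext
  split at h <;> split at h <;>
    (apply_fun Fin.val at h; simp only at h; omega)

lemma delMap_surj {n : ℕ} (i k : Fin n) (hk : k ≠ i) : ∃ j, delMap i j = k := by
  have hik : (k : ℕ) ≠ (i : ℕ) := fun hv => hk (Fin.ext hv)
  rcases lt_or_gt_of_ne hik with hlt | hgt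
  · refine ⟨⟨(k : ℕ), by have := i.isLt; omega⟩, ?_⟩
    unfold delMap
    rw [dif_pos hlt]
  · refine ⟨⟨(k : ℕ) - 1, by have := k.isLt; omega⟩, ?_⟩
    unfold delMap
    rw [dif_neg (by simp; omega)]
    apply Fin.ext
    simp
    omega

lemma fOnes_del {n : ℕ} (A : Matrix (Fin n) (Fin n) ℕ) (i : Fin n) :
    fOnes (A.submatrix (delMap i) (delMap i)) =
      (Finset.univ.filter
        (fun p : Fin n × Fin n => A p.1 p.2 = 1 ∧ p.1 ≠ i ∧ p.2 ≠ i)).card := by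
  unfold fOnes
  apply Finset.card_bij (fun p _ => (delMap i p.1, delMap i p.2))
  · intro p hp
    simp only [Finset.mem_filter, Finset.mem_univ, true_and] at hp ⊢
    exact ⟨hp, delMap_ne i p.1, delMap_ne i p.2⟩
  · intro a ha b hb hab
    have h1 : delMap i a.1 = delMap i b.1 := congrArg Prod.fst hab
    have h2 : delMap i a.2 = delMap i b.2 := congrArg Prod.snd hab
    exact Prod.ext (delMap_inj i h1) (delMap_inj i h2)
  · intro p hp
    simp only [Finset.mem_filter, Finset.mem_univ, true_and] at hp
    obtain ⟨hA, h1, h2⟩ := hp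
    obtain ⟨j1, hj1⟩ := delMap_surj i p.1 h1
    obtain ⟨j2, hj2⟩ := delMap_surj i p.2 h2
    refine ⟨(j1, j2), ?_, ?_⟩
    · simp only [Finset.mem_filter, Finset.mem_univ, true_and, Matrix.submatrix_apply]
      exact Finset.mem_filter.mpr ⟨Finset.mem_univ _, show A (delMap i j1) (delMap i j2) = 1 by rw [hj1, hj2]; exact hA⟩
    · simp [hj1, hj2]

lemma sum_fOnes_del {n : ℕ} (A : Matrix (Fin n) (Fin n) ℕ) :
    (n - 2) * fOnes A ≤ ∑ i : Fin n, fOnes (A.submatrix (delMap i) (delMap i)) := by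
  classical
  have hrw : ∀ i : Fin n, fOnes (A.submatrix (delMap i) (delMap i)) =
      ∑ p ∈ Finset.univ.filter (fun p : Fin n × Fin n => A p.1 p.2 = 1),
        (if p.1 ≠ i ∧ p.2 ≠ i then 1 else 0) := by
    intro i
    rw [fOnes_del]
    rw [← Finset.filter_filter, Finset.card_filter]
  calc (n - 2) * fOnes A
      = ∑ p ∈ Finset.univ.filter (fun p : Fin n × Fin n => A p.1 p.2 = 1), (n - 2) := by
        rw [Finset.sum_const, fOnes, smul_eq_mul, mul_comm]
    _ ≤ ∑ p ∈ Finset.univ.filter (fun p : Fin n × Fin n => A p.1 p.2 = 1),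
          ∑ i : Fin n, (if p.1 ≠ i ∧ p.2 ≠ i then 1 else 0) := by
        apply Finset.sum_le_sum
        intro p _
        rw [← Finset.card_filter]
        have hsub : (Finset.univ : Finset (Fin n)).filter
            (fun i => ¬(p.1 ≠ i ∧ p.2 ≠ i)) ⊆ {p.1, p.2} := by
          intro i hi
          simp only [Finset.mem_filter, Finset.mem_univ, true_and, not_and_or,
            not_ne_iff] at hi
          simp [Finset.mem_insert]
          tauto
        have hc2 : ((Finset.univ : Finset (Fin n)).filter
            (fun i => ¬(p.1 ≠ i ∧ p.2 ≠ i))).card ≤ 2 :=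
          le_trans (Finset.card_le_card hsub) (Finset.card_insert_le _ _ |>.trans (by simp))
        have hsplit := Finset.card_filter_add_card_filter_not
          (s := (Finset.univ : Finset (Fin n))) (p := fun i => p.1 ≠ i ∧ p.2 ≠ i)
        simp only [Finset.card_univ, Fintype.card_fin] at hsplit
        omega
    _ = ∑ i : Fin n, fOnes (A.submatrix (delMap i) (delMap i)) := by
        rw [Finset.sum_comm]
        exact Finset.sum_congr rfl (fun i _ => (hrw i).symm)

/-- if `n ≥ 3`, `(p,q) ≠ (0,0)` and the n×n 0-1 matrix `A`
satisfies `f(A(i)) ≤ (n−1)(n−2)/2 − p(n−1)/2 − q` for every `i` (as rationals),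
then `f(A) ≤ n(n−1)/2 − p(n+1)/2 − q − 1`. -/
theorem stmt3 (n p q : ℕ) (hn : 3 ≤ n) (hpq : ¬(p = 0 ∧ q = 0))
    (A : Matrix (Fin n) (Fin n) ℕ) (h01 : isZeroOne A)
    (h : ∀ i : Fin n,
      (fOnes (A.submatrix (delMap i) (delMap i)) : ℚ) ≤
        ((n : ℚ) - 1) * ((n : ℚ) - 2) / 2 - (p : ℚ) * ((n : ℚ) - 1) / 2 - (q : ℚ)) :
    (fOnes A : ℚ) ≤
      (n : ℚ) * ((n : ℚ) - 1) / 2 - (p : ℚ) * ((n : ℚ) + 1) / 2 - (q : ℚ) - 1 := by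
  classical
  set N : ℤ := (n : ℤ) with hN
  set P : ℤ := (p : ℤ) with hP
  set Q : ℤ := (q : ℤ) with hQ
  set F : ℤ := (fOnes A : ℤ) with hF
  -- the per-index integer bound
  set E : ℤ := (N - 1) * (N - 2) - P * (N - 1) - 2 * Q with hE
  have hNe : (3 : ℤ) ≤ N := by rw [hN]; exact_mod_cast hn
  have hP0 : 0 ≤ P := Int.ofNat_nonneg p
  have hQ0 : 0 ≤ Q := Int.ofNat_nonneg q
  have hpq' : 1 ≤ P + 2 * Q := by
    have h1 : 1 ≤ p + 2 * q := by omega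
    rw [hP, hQ]; exact_mod_cast h1
  have hbound : ∀ i : Fin n,
      2 * (fOnes (A.submatrix (delMap i) (delMap i)) : ℤ) ≤ E := by
    intro i
    have hq := h i
    have h2 : 2 * (fOnes (A.submatrix (delMap i) (delMap i)) : ℚ) ≤
        ((n : ℚ) - 1) * ((n : ℚ) - 2) - (p : ℚ) * ((n : ℚ) - 1) - 2 * (q : ℚ) := by
      linarith
    have : (2 * (fOnes (A.submatrix (delMap i) (delMap i)) : ℤ) : ℚ) ≤ ((E : ℤ) : ℚ) := by
      push_cast [hE, hN, hP, hQ]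
      push_cast at h2
      linarith
    exact_mod_cast this
  -- sum over i
  have hsumN := sum_fOnes_del A
  have hsum : (N - 2) * F ≤ ∑ i : Fin n, (fOnes (A.submatrix (delMap i) (delMap i)) : ℤ) := by
    have : (((n - 2) * fOnes A : ℕ) : ℤ) ≤
        ((∑ i : Fin n, fOnes (A.submatrix (delMap i) (delMap i)) : ℕ) : ℤ) := by
      exact_mod_cast hsumN
    push_cast at this
    have hc : ((n : ℤ) - 2) = (((n - 2 : ℕ)) : ℤ) := by
      have : 2 ≤ n := by omega
      omega
    rw [hN, hF, hc]
    exact_mod_cast this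
  -- key target: 2 * F ≤ N*(N-1) - P*(N+1) - 2*Q - 2
  suffices hkey : 2 * F ≤ N * (N - 1) - P * (N + 1) - 2 * Q - 2 by
    have : ((2 * F : ℤ) : ℚ) ≤ ((N * (N - 1) - P * (N + 1) - 2 * Q - 2 : ℤ) : ℚ) := by
      exact_mod_cast hkey
    push_cast [hN, hP, hQ, hF] at this
    linarith
  have hstep : 2 * ((N - 2) * F) ≤ N * E := by
    calc 2 * ((N - 2) * F)
        ≤ 2 * ∑ i : Fin n, (fOnes (A.submatrix (delMap i) (delMap i)) : ℤ) := by linarith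
      _ = ∑ i : Fin n, 2 * (fOnes (A.submatrix (delMap i) (delMap i)) : ℤ) := by
          rw [Finset.mul_sum]
      _ ≤ ∑ _i : Fin n, E := Finset.sum_le_sum (fun i _ => hbound i)
      _ = N * E := by rw [Finset.sum_const, Finset.card_univ, Fintype.card_fin]
                      push_cast [hN]; ring
  rcases Int.even_or_odd E with ⟨e, he⟩ | ⟨e, he⟩
  · -- E even, E = e + e
    set t : ℤ := e + N - 2 - P with ht
    have h2e : 2 * e = (N - 1) * (N - 2) - P * (N - 1) - 2 * Q := by
      rw [hE] at he; linarith
    have hFe : (N - 2) * F ≤ N * e := by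
      rw [he] at hstep
      have : N * (e + e) = 2 * (N * e) := by ring
      linarith
    have hid : N * e = (N - 2) * t + (N - 2 - P - 2 * Q) := by
      rw [ht]; linear_combination h2e
    have hFt : F ≤ t := by
      by_contra hc
      push_neg at hc
      have h1 : t + 1 ≤ F := hc
      have h2 : (N - 2) * (t + 1) ≤ (N - 2) * F :=
        mul_le_mul_of_nonneg_left h1 (by linarith)
      linarith
    have h2t : 2 * t = N * (N - 1) - P * (N + 1) - 2 * Q - 2 := by
      rw [ht]; linear_combination h2e
    linarith
  · -- E odd, E = 2*e + 1
    have hbound' : ∀ i : Fin n,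
        2 * (fOnes (A.submatrix (delMap i) (delMap i)) : ℤ) ≤ E - 1 := by
      intro i
      have h1 := hbound i
      rcases lt_or_eq_of_le h1 with h2 | h2
      · omega
      · exfalso
        have hodd : Odd (2 * (fOnes (A.submatrix (delMap i) (delMap i)) : ℤ)) := by
          rw [h2]; exact ⟨e, he⟩
        exact (Int.not_odd_iff_even.mpr ⟨_, (two_mul _)⟩) hodd
    have hstep' : 2 * ((N - 2) * F) ≤ N * (E - 1) := by
      calc 2 * ((N - 2) * F)
          ≤ 2 * ∑ i : Fin n, (fOnes (A.submatrix (delMap i) (delMap i)) : ℤ) := by linarith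
        _ = ∑ i : Fin n, 2 * (fOnes (A.submatrix (delMap i) (delMap i)) : ℤ) := by
            rw [Finset.mul_sum]
        _ ≤ ∑ _i : Fin n, (E - 1) := Finset.sum_le_sum (fun i _ => hbound' i)
        _ = N * (E - 1) := by rw [Finset.sum_const, Finset.card_univ, Fintype.card_fin]
                              push_cast [hN]; ring
    set t : ℤ := e + N - 2 - P with ht
    have h2e : 2 * e = (N - 1) * (N - 2) - P * (N - 1) - 2 * Q - 1 := by
      rw [hE] at he; linarith
    have hFe : (N - 2) * F ≤ N * e := by
      rw [he] at hstep'
      have : N * (2 * e + 1 - 1) = 2 * (N * e) := by ring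
      linarith
    have hid : N * e = (N - 2) * t + (N - 3 - P - 2 * Q) := by
      rw [ht]; linear_combination h2e
    have hFt : F ≤ t := by
      by_contra hc
      push_neg at hc
      have h1 : t + 1 ≤ F := hc
      have h2 : (N - 2) * (t + 1) ≤ (N - 2) * F :=
        mul_le_mul_of_nonneg_left h1 (by linarith)
      linarith
    have h2t : 2 * t = N * (N - 1) - P * (N + 1) - 2 * Q - 3 := by
      rw [ht]; linear_combination h2e
    linarith
end

section
/- Let m = k + t + s + 1 with integers s ≥ 1, k ≥ 1, t ≥ 3, and let A = (a_{ij}) be the m×m 0-1 matrix in block form with block row/column sizes (k, t, s, 1): the first block row is [0_{k×k}, J_{k,t}, J_{k,s}, x₁], the second is [0, T_t, J_{t,s}, x₂], the third is [0, 0, 0, x₃], and the last row is [y₁ᵀ, y₂ᵀ, y₃ᵀ, α], where x₁,y₁ ∈ {0,1}^k, x₂,y₂ ∈ {0,1}^t, x₃,y₃ ∈ {0,1}^s and α ∈ {0,1}. If A ∈ Γ(m, t+1) and f(x₁)+f(x₂)+f(x₃)+f(y₁)+f(y₂)+f(y₃)+α ≥ s+k+2, then α = 0, y₁ = 0, x₃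 = 0, and a_{i,m}·a_{m,j} = 0 for all 1 ≤ i, j ≤ m−1 with j ≤ i+2. -/
/-- `f(x)` for a 0-1 vector: the number of its entries equal to one. -/
def fVec {n : ℕ} (x : Fin n → ℕ) : ℕ :=
  (Finset.univ.filter (fun i => x i = 1)).card

/-- `Γ(n,k)`: n×n 0-1 matrices whose k-th power is again a 0-1 matrix. -/
def Gamma (n k : ℕ) (A : Matrix (Fin n) (Fin n) ℕ) : Prop :=
  isZeroOne A ∧ ∀ i j, (A ^ k) i j = 0 ∨ (A ^ k) i j = 1

/-- The m×m matrix (m = k+t+s+1) with block row/column sizes (k,t,s,1):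
`[[0, J_{k,t}, J_{k,s}, x₁], [0, T_t, J_{t,s}, x₂], [0, 0, 0, x₃],
[y₁ᵀ, y₂ᵀ, y₃ᵀ, α]]`. -/
def BlockA (k t s : ℕ) (x₁ y₁ : Fin k → ℕ) (x₂ y₂ : Fin t → ℕ)
    (x₃ y₃ : Fin s → ℕ) (α : ℕ) :
    Matrix (Fin (k + t + s + 1)) (Fin (k + t + s + 1)) ℕ :=
  fun i j =>
    if hi1 : (i : ℕ) < k then
      if (j : ℕ) < k then 0
      else if (j : ℕ) < k + t + s then 1
      else x₁ ⟨i, hi1⟩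
    else if hi2 : (i : ℕ) < k + t then
      if (j : ℕ) < k then 0
      else if (j : ℕ) < k + t then (if (i : ℕ) < (j : ℕ) then 1 else 0)
      else if (j : ℕ) < k + t + s then 1
      else x₂ ⟨(i : ℕ) - k, by omega⟩
    else if hi3 : (i : ℕ) < k + t + s then
      if (j : ℕ) < k + t + s then 0
      else x₃ ⟨(i : ℕ) - (k + t), by omega⟩
    else
      if hj1 : (j : ℕ) < k then y₁ ⟨j, hj1⟩
      else if hj2 : (j : ℕ) < k + t then y₂ ⟨(j : ℕ) - k, by omega⟩
      else if hj3 : (j : ℕ) < k + t + s then y₃ ⟨(j : ℕ) - (k + t), by omega⟩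
      else α

namespace Stmt4Aux

lemma mul_ge_one {n : ℕ} (X Y : Matrix (Fin n) (Fin n) ℕ) (i j l : Fin n)
    (h1 : 1 ≤ X i l) (h2 : 1 ≤ Y l j) : 1 ≤ (X * Y) i j := by
  rw [Matrix.mul_apply]
  have h' : X i l * Y l j ≤ ∑ c, X i c * Y c j :=
    Finset.single_le_sum (f := fun c => X i c * Y c j)
      (fun c _ => Nat.zero_le _) (Finset.mem_univ l)
  have h := Nat.mul_le_mul h1 h2
  omega

lemma mul_ge_two {n : ℕ} (X Y : Matrix (Fin n) (Fin n) ℕ) (i j l l' : Fin n)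
    (hne : l ≠ l') (h1 : 1 ≤ X i l) (h2 : 1 ≤ Y l j)
    (h3 : 1 ≤ X i l') (h4 : 1 ≤ Y l' j) : 2 ≤ (X * Y) i j := by
  rw [Matrix.mul_apply]
  have hsub : ∑ c ∈ ({l, l'} : Finset (Fin n)), X i c * Y c j
      ≤ ∑ c, X i c * Y c j := Finset.sum_le_sum_of_subset (Finset.subset_univ _)
  rw [Finset.sum_pair hne] at hsub
  have ha := Nat.mul_le_mul h1 h2
  have hb := Nat.mul_le_mul h3 h4
  omega

lemma pow_split {n : ℕ} (X : Matrix (Fin n) (Fin n) ℕ) (a b c : ℕ)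
    (h : a + b = c) : X ^ c = X ^ a * X ^ b := by
  rw [← h, pow_add]

section

variable (k t s : ℕ) (x₁ y₁ : Fin k → ℕ) (x₂ y₂ : Fin t → ℕ)
  (x₃ y₃ : Fin s → ℕ) (α : ℕ)

local notation "A" => BlockA k t s x₁ y₁ x₂ y₂ x₃ y₃ α

lemma eKT (u a : ℕ) (hu : u < k) (ha : a < t) :
    A ⟨u, by omega⟩ ⟨k + a, by omega⟩ = 1 := by
  simp only [BlockA]
  rw [dif_pos (show u < k from hu), if_neg (by omega : ¬ k + a < k),
    if_pos (by omega : k + a < k + t + s)]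

lemma eKS (u b : ℕ) (hu : u < k) (hb : b < s) :
    A ⟨u, by omega⟩ ⟨k + t + b, by omega⟩ = 1 := by
  simp only [BlockA]
  rw [dif_pos (show u < k from hu), if_neg (by omega : ¬ k + t + b < k),
    if_pos (by omega : k + t + b < k + t + s)]

lemma eKm (u : ℕ) (hu : u < k) :
    A ⟨u, by omega⟩ ⟨k + t + s, by omega⟩ = x₁ ⟨u, hu⟩ := by
  simp only [BlockA]
  rw [dif_pos (show u < k from hu), if_neg (by omega : ¬ k + t + s < k),
    if_neg (lt_irrefl _)]

lemma eTT (a b : ℕ) (ha : a < t) (hb : b < t) (hab : a < b) :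
    A ⟨k + a, by omega⟩ ⟨k + b, by omega⟩ = 1 := by
  simp only [BlockA]
  rw [dif_neg (by omega : ¬ k + a < k), dif_pos (by omega : k + a < k + t),
    if_neg (by omega : ¬ k + b < k), if_pos (by omega : k + b < k + t),
    if_pos (by omega : k + a < k + b)]

lemma eTS (a b : ℕ) (ha : a < t) (hb : b < s) :
    A ⟨k + a, by omega⟩ ⟨k + t + b, by omega⟩ = 1 := by
  simp only [BlockA]
  rw [dif_neg (by omega : ¬ k + a < k), dif_pos (by omega : k + a < k + t),
    if_neg (by omega : ¬ k + t + b < k), if_neg (by omega : ¬ k + t + b < k + t),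
    if_pos (by omega : k + t + b < k + t + s)]

lemma eTm (a : ℕ) (ha : a < t) :
    A ⟨k + a, by omega⟩ ⟨k + t + s, by omega⟩ = x₂ ⟨a, ha⟩ := by
  simp only [BlockA]
  rw [dif_neg (by omega : ¬ k + a < k), dif_pos (by omega : k + a < k + t),
    if_neg (by omega : ¬ k + t + s < k), if_neg (by omega : ¬ k + t + s < k + t),
    if_neg (lt_irrefl _)]
  congr 1
  exact Fin.ext (by simp)

lemma eSm (b : ℕ) (hb : b < s) :
    A ⟨k + t + b, by omega⟩ ⟨k + t + s, by omega⟩ = x₃ ⟨b, hb⟩ := by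
  simp only [BlockA]
  rw [dif_neg (by omega : ¬ k + t + b < k), dif_neg (by omega : ¬ k + t + b < k + t),
    dif_pos (by omega : k + t + b < k + t + s), if_neg (lt_irrefl _)]
  congr 1
  exact Fin.ext (by simp)

lemma emK (u : ℕ) (hu : u < k) :
    A ⟨k + t + s, by omega⟩ ⟨u, by omega⟩ = y₁ ⟨u, hu⟩ := by
  simp only [BlockA]
  rw [dif_neg (by omega : ¬ k + t + s < k), dif_neg (by omega : ¬ k + t + s < k + t),
    dif_neg (lt_irrefl _), dif_pos (show u < k from hu)]

lemma emT (a : ℕ) (ha : a < t) :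
    A ⟨k + t + s, by omega⟩ ⟨k + a, by omega⟩ = y₂ ⟨a, ha⟩ := by
  simp only [BlockA]
  rw [dif_neg (by omega : ¬ k + t + s < k), dif_neg (by omega : ¬ k + t + s < k + t),
    dif_neg (lt_irrefl _), dif_neg (by omega : ¬ k + a < k),
    dif_pos (by omega : k + a < k + t)]
  congr 1
  exact Fin.ext (by simp)

lemma emS (b : ℕ) (hb : b < s) :
    A ⟨k + t + s, by omega⟩ ⟨k + t + b, by omega⟩ = y₃ ⟨b, hb⟩ := by
  simp only [BlockA]
  rw [dif_neg (by omega : ¬ k + t + s < k), dif_neg (by omega : ¬ k + t + s < k + t),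
    dif_neg (lt_irrefl _), dif_neg (by omega : ¬ k + t + b < k),
    dif_neg (by omega : ¬ k + t + b < k + t),
    dif_pos (by omega : k + t + b < k + t + s)]
  congr 1
  exact Fin.ext (by simp)

lemma emm :
    A ⟨k + t + s, by omega⟩ ⟨k + t + s, by omega⟩ = α := by
  simp only [BlockA]
  rw [dif_neg (by omega : ¬ k + t + s < k), dif_neg (by omega : ¬ k + t + s < k + t),
    dif_neg (lt_irrefl _), dif_neg (by omega : ¬ k + t + s < k),
    dif_neg (by omega : ¬ k + t + s < k + t), dif_neg (lt_irrefl _)]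

/-- chain inside T: walk of length `p` from position `a` to position `b = a+p`. -/
lemma WTT (p a b : ℕ) (hab : a + p = b) (hb : b < t) :
    1 ≤ (A ^ p) ⟨k + a, by omega⟩ ⟨k + b, by omega⟩ := by
  induction p generalizing a with
  | zero =>
    have : a = b := by omega
    subst this
    rw [pow_zero]
    exact le_of_eq (Matrix.one_apply_eq _).symm
  | succ p ih =>
    rw [pow_split A 1 p (p + 1) (by omega)]
    refine mul_ge_one _ _ _ _ ⟨k + (a + 1), by omega⟩ ?_ ?_
    · rw [pow_one]
      exact (eTT k t s x₁ y₁ x₂ y₂ x₃ y₃ α a (a+1) (by omega) (by omega) (by omega)).ge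
    · exact ih (a + 1) (by omega)

/-- walk of length `L ≥ 1` from T-position `a` to S-position `b`, if `a + L ≤ t`. -/
lemma WTS (L a : ℕ) (hL1 : 1 ≤ L) (hL : a + L ≤ t) (b : ℕ) (hb : b < s) :
    1 ≤ (A ^ L) ⟨k + a, by omega⟩ ⟨k + t + b, by omega⟩ := by
  induction L generalizing a with
  | zero => omega
  | succ L ih =>
    rcases Nat.eq_zero_or_pos L with hL0 | hL0
    · subst hL0
      rw [pow_one]
      exact (eTS k t s x₁ y₁ x₂ y₂ x₃ y₃ α a b (by omega) hb).ge
    · rw [pow_split A 1 L (L + 1) (by omega)]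
      refine mul_ge_one _ _ _ _ ⟨k + (a + 1), by omega⟩ ?_ ?_
      · rw [pow_one]
        exact (eTT k t s x₁ y₁ x₂ y₂ x₃ y₃ α a (a+1) (by omega) (by omega) (by omega)).ge
      · exact ih (a + 1) (by omega) (by omega)

/-- walk of length `p` (1 ≤ p ≤ c+1) from K-vertex `u` to T-position `c`. -/
lemma WKT (p c u : ℕ) (hu : u < k) (hp1 : 1 ≤ p) (hpc : p ≤ c + 1) (hc : c < t) :
    1 ≤ (A ^ p) ⟨u, by omega⟩ ⟨k + c, by omega⟩ := by
  obtain ⟨p', rfl⟩ : ∃ p', p = p' + 1 := ⟨p - 1, by omega⟩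
  rw [pow_split A 1 p' (p' + 1) (by omega)]
  refine mul_ge_one _ _ _ _ ⟨k + (c - p'), by omega⟩ ?_ ?_
  · rw [pow_one]
    exact (eKT k t s x₁ y₁ x₂ y₂ x₃ y₃ α u (c - p') hu (by omega)).ge
  · exact WTT k t s x₁ y₁ x₂ y₂ x₃ y₃ α p' (c - p') c (by omega) hc

/-- loops at the last vertex when `α = 1`. -/
lemma Wloop (hα1 : α = 1) (n : ℕ) :
    1 ≤ (A ^ n) ⟨k + t + s, by omega⟩ ⟨k + t + s, by omega⟩ := by
  induction n with
  | zero => rw [pow_zero]; exact le_of_eq (Matrix.one_apply_eq _).symm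
  | succ n ih =>
    rw [pow_split A 1 n (n + 1) (by omega)]
    refine mul_ge_one _ _ _ _ ⟨k + t + s, by omega⟩ ?_ ih
    rw [pow_one, emm k t s x₁ y₁ x₂ y₂ x₃ y₃ α, hα1]


/-- helper: an entry of `A^(t+1)` cannot be `≥ 2`. -/
lemma not_two (hpow : ∀ i j, (A ^ (t+1)) i j = 0 ∨ (A ^ (t+1)) i j = 1)
    (i j : Fin (k+t+s+1)) (h2 : 2 ≤ (A ^ (t+1)) i j) : False := by
  rcases hpow i j with h | h <;> omega

/-- `x₃ = 0`. -/
lemma LX3 (hk : 1 ≤ k) (ht : 3 ≤ t)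
    (hpow : ∀ i j, (A ^ (t+1)) i j = 0 ∨ (A ^ (t+1)) i j = 1)
    (b : ℕ) (hb : b < s) (h1 : x₃ ⟨b, hb⟩ = 1) : False := by
  refine not_two k t s x₁ y₁ x₂ y₂ x₃ y₃ α hpow ⟨0, by omega⟩ ⟨k + t + s, by omega⟩ ?_
  rw [pow_split A 1 t (t+1) (by omega)]
  refine mul_ge_two _ _ _ _ ⟨k + 0, by omega⟩ ⟨k + 1, by omega⟩
    (by intro h; rw [Fin.mk.injEq] at h; omega) ?_ ?_ ?_ ?_
  · rw [pow_one]; exact (eKT k t s x₁ y₁ x₂ y₂ x₃ y₃ α 0 0 (by omega) (by omega)).ge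
  · rw [pow_split A (t-1) 1 t (by omega)]
    refine mul_ge_one _ _ _ _ ⟨k + t + b, by omega⟩ ?_ ?_
    · exact WTS k t s x₁ y₁ x₂ y₂ x₃ y₃ α (t-1) 0 (by omega) (by omega) b hb
    · rw [pow_one, eSm k t s x₁ y₁ x₂ y₂ x₃ y₃ α b hb, h1]
  · rw [pow_one]; exact (eKT k t s x₁ y₁ x₂ y₂ x₃ y₃ α 0 1 (by omega) (by omega)).ge
  · rw [pow_split A (t-1) 1 t (by omega)]
    refine mul_ge_one _ _ _ _ ⟨k + t + b, by omega⟩ ?_ ?_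
    · exact WTS k t s x₁ y₁ x₂ y₂ x₃ y₃ α (t-1) 1 (by omega) (by omega) b hb
    · rw [pow_one, eSm k t s x₁ y₁ x₂ y₂ x₃ y₃ α b hb, h1]

/-- `y₁ = 0`. -/
lemma LY1 (ht : 3 ≤ t) (hs : 1 ≤ s)
    (hpow : ∀ i j, (A ^ (t+1)) i j = 0 ∨ (A ^ (t+1)) i j = 1)
    (u : ℕ) (hu : u < k) (h1 : y₁ ⟨u, hu⟩ = 1) : False := by
  refine not_two k t s x₁ y₁ x₂ y₂ x₃ y₃ α hpow ⟨k + t + s, by omega⟩ ⟨k + t + 0, by omega⟩ ?_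
  rw [pow_split A 2 (t-1) (t+1) (by omega)]
  refine mul_ge_two _ _ _ _ ⟨k + 0, by omega⟩ ⟨k + 1, by omega⟩
    (by intro h; rw [Fin.mk.injEq] at h; omega) ?_ ?_ ?_ ?_
  · rw [pow_split A 1 1 2 rfl]
    refine mul_ge_one _ _ _ _ ⟨u, by omega⟩ ?_ ?_
    · rw [pow_one, emK k t s x₁ y₁ x₂ y₂ x₃ y₃ α u hu, h1]
    · rw [pow_one]; exact (eKT k t s x₁ y₁ x₂ y₂ x₃ y₃ α u 0 hu (by omega)).ge
  · exact WTS k t s x₁ y₁ x₂ y₂ x₃ y₃ α (t-1) 0 (by omega) (by omega) 0 (by omega)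
  · rw [pow_split A 1 1 2 rfl]
    refine mul_ge_one _ _ _ _ ⟨u, by omega⟩ ?_ ?_
    · rw [pow_one, emK k t s x₁ y₁ x₂ y₂ x₃ y₃ α u hu, h1]
    · rw [pow_one]; exact (eKT k t s x₁ y₁ x₂ y₂ x₃ y₃ α u 1 hu (by omega)).ge
  · exact WTS k t s x₁ y₁ x₂ y₂ x₃ y₃ α (t-1) 1 (by omega) (by omega) 0 (by omega)

/-- `α = 1` kills pairs inside `x₂`. -/
lemma LE1 (hk : 1 ≤ k) (ht : 3 ≤ t) (hα1 : α = 1)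
    (hpow : ∀ i j, (A ^ (t+1)) i j = 0 ∨ (A ^ (t+1)) i j = 1)
    (q q' : ℕ) (hq : q < t) (hq' : q' < t) (hlt : q < q')
    (h1 : x₂ ⟨q, hq⟩ = 1) (h2 : x₂ ⟨q', hq'⟩ = 1) : False := by
  refine not_two k t s x₁ y₁ x₂ y₂ x₃ y₃ α hpow ⟨0, by omega⟩ ⟨k + t + s, by omega⟩ ?_
  rw [pow_split A 1 t (t+1) (by omega)]
  refine mul_ge_two _ _ _ _ ⟨k + q, by omega⟩ ⟨k + q', by omega⟩
    (by intro h; rw [Fin.mk.injEq] at h; omega) ?_ ?_ ?_ ?_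
  · rw [pow_one]; exact (eKT k t s x₁ y₁ x₂ y₂ x₃ y₃ α 0 q (by omega) hq).ge
  · rw [pow_split A 1 (t-1) t (by omega)]
    refine mul_ge_one _ _ _ _ ⟨k + t + s, by omega⟩ ?_ ?_
    · rw [pow_one, eTm k t s x₁ y₁ x₂ y₂ x₃ y₃ α q hq, h1]
    · exact Wloop k t s x₁ y₁ x₂ y₂ x₃ y₃ α hα1 (t-1)
  · rw [pow_one]; exact (eKT k t s x₁ y₁ x₂ y₂ x₃ y₃ α 0 q' (by omega) hq').ge
  · rw [pow_split A 1 (t-1) t (by omega)]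
    refine mul_ge_one _ _ _ _ ⟨k + t + s, by omega⟩ ?_ ?_
    · rw [pow_one, eTm k t s x₁ y₁ x₂ y₂ x₃ y₃ α q' hq', h2]
    · exact Wloop k t s x₁ y₁ x₂ y₂ x₃ y₃ α hα1 (t-1)

/-- `α = 1` kills `x₁` together with `x₂`. -/
lemma LE2 (ht : 3 ≤ t) (hα1 : α = 1)
    (hpow : ∀ i j, (A ^ (t+1)) i j = 0 ∨ (A ^ (t+1)) i j = 1)
    (u : ℕ) (hu : u < k) (q : ℕ) (hq : q < t)
    (h1 : x₁ ⟨u, hu⟩ = 1) (h2 : x₂ ⟨q, hq⟩ = 1) : False := by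
  refine not_two k t s x₁ y₁ x₂ y₂ x₃ y₃ α hpow ⟨u, by omega⟩ ⟨k + t + s, by omega⟩ ?_
  rw [pow_split A 1 t (t+1) (by omega)]
  refine mul_ge_two _ _ _ _ ⟨k + q, by omega⟩ ⟨k + t + s, by omega⟩
    (by intro h; rw [Fin.mk.injEq] at h; omega) ?_ ?_ ?_ ?_
  · rw [pow_one]; exact (eKT k t s x₁ y₁ x₂ y₂ x₃ y₃ α u q hu hq).ge
  · rw [pow_split A 1 (t-1) t (by omega)]
    refine mul_ge_one _ _ _ _ ⟨k + t + s, by omega⟩ ?_ ?_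
    · rw [pow_one, eTm k t s x₁ y₁ x₂ y₂ x₃ y₃ α q hq, h2]
    · exact Wloop k t s x₁ y₁ x₂ y₂ x₃ y₃ α hα1 (t-1)
  · rw [pow_one, eKm k t s x₁ y₁ x₂ y₂ x₃ y₃ α u hu, h1]
  · exact Wloop k t s x₁ y₁ x₂ y₂ x₃ y₃ α hα1 t

/-- `α = 1` kills pairs inside `y₂`. -/
lemma LE3 (ht : 3 ≤ t) (hs : 1 ≤ s) (hα1 : α = 1)
    (hpow : ∀ i j, (A ^ (t+1)) i j = 0 ∨ (A ^ (t+1)) i j = 1)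
    (q q' : ℕ) (hq : q < t) (hq' : q' < t) (hlt : q < q')
    (h1 : y₂ ⟨q, hq⟩ = 1) (h2 : y₂ ⟨q', hq'⟩ = 1) : False := by
  refine not_two k t s x₁ y₁ x₂ y₂ x₃ y₃ α hpow ⟨k + t + s, by omega⟩ ⟨k + t + 0, by omega⟩ ?_
  rw [pow_split A t 1 (t+1) (by omega)]
  refine mul_ge_two _ _ _ _ ⟨k + q, by omega⟩ ⟨k + q', by omega⟩
    (by intro h; rw [Fin.mk.injEq] at h; omega) ?_ ?_ ?_ ?_
  · rw [pow_split A (t-1) 1 t (by omega)]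
    refine mul_ge_one _ _ _ _ ⟨k + t + s, by omega⟩ ?_ ?_
    · exact Wloop k t s x₁ y₁ x₂ y₂ x₃ y₃ α hα1 (t-1)
    · rw [pow_one, emT k t s x₁ y₁ x₂ y₂ x₃ y₃ α q hq, h1]
  · rw [pow_one]; exact (eTS k t s x₁ y₁ x₂ y₂ x₃ y₃ α q 0 hq (by omega)).ge
  · rw [pow_split A (t-1) 1 t (by omega)]
    refine mul_ge_one _ _ _ _ ⟨k + t + s, by omega⟩ ?_ ?_
    · exact Wloop k t s x₁ y₁ x₂ y₂ x₃ y₃ α hα1 (t-1)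
    · rw [pow_one, emT k t s x₁ y₁ x₂ y₂ x₃ y₃ α q' hq', h2]
  · rw [pow_one]; exact (eTS k t s x₁ y₁ x₂ y₂ x₃ y₃ α q' 0 hq' (by omega)).ge

/-- `α = 1` kills `y₂` together with `y₃`. -/
lemma LE4 (ht : 3 ≤ t) (hα1 : α = 1)
    (hpow : ∀ i j, (A ^ (t+1)) i j = 0 ∨ (A ^ (t+1)) i j = 1)
    (q : ℕ) (hq : q < t) (b : ℕ) (hb : b < s)
    (h1 : y₂ ⟨q, hq⟩ = 1) (h2 : y₃ ⟨b, hb⟩ = 1) : False := by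
  refine not_two k t s x₁ y₁ x₂ y₂ x₃ y₃ α hpow ⟨k + t + s, by omega⟩ ⟨k + t + b, by omega⟩ ?_
  rw [pow_split A t 1 (t+1) (by omega)]
  refine mul_ge_two _ _ _ _ ⟨k + q, by omega⟩ ⟨k + t + s, by omega⟩
    (by intro h; rw [Fin.mk.injEq] at h; omega) ?_ ?_ ?_ ?_
  · rw [pow_split A (t-1) 1 t (by omega)]
    refine mul_ge_one _ _ _ _ ⟨k + t + s, by omega⟩ ?_ ?_
    · exact Wloop k t s x₁ y₁ x₂ y₂ x₃ y₃ α hα1 (t-1)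
    · rw [pow_one, emT k t s x₁ y₁ x₂ y₂ x₃ y₃ α q hq, h1]
  · rw [pow_one]; exact (eTS k t s x₁ y₁ x₂ y₂ x₃ y₃ α q b hq hb).ge
  · exact Wloop k t s x₁ y₁ x₂ y₂ x₃ y₃ α hα1 t
  · rw [pow_one, emS k t s x₁ y₁ x₂ y₂ x₃ y₃ α b hb, h2]

/-- `x₁` together with a low entry of `y₂` is impossible. -/
lemma LF1 (ht : 3 ≤ t) (hs : 1 ≤ s)
    (hpow : ∀ i j, (A ^ (t+1)) i j = 0 ∨ (A ^ (t+1)) i j = 1)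
    (u : ℕ) (hu : u < k) (q : ℕ) (hq : q < t) (hq1 : q ≤ 1)
    (h1 : x₁ ⟨u, hu⟩ = 1) (h2 : y₂ ⟨q, hq⟩ = 1) : False := by
  refine not_two k t s x₁ y₁ x₂ y₂ x₃ y₃ α hpow ⟨u, by omega⟩ ⟨k + t + 0, by omega⟩ ?_
  rw [pow_split A 1 t (t+1) (by omega)]
  refine mul_ge_two _ _ _ _ ⟨k + 0, by omega⟩ ⟨k + t + s, by omega⟩
    (by intro h; rw [Fin.mk.injEq] at h; omega) ?_ ?_ ?_ ?_
  · rw [pow_one]; exact (eKT k t s x₁ y₁ x₂ y₂ x₃ y₃ α u 0 hu (by omega)).ge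
  · exact WTS k t s x₁ y₁ x₂ y₂ x₃ y₃ α t 0 (by omega) (by omega) 0 (by omega)
  · rw [pow_one, eKm k t s x₁ y₁ x₂ y₂ x₃ y₃ α u hu, h1]
  · rw [pow_split A 1 (t-1) t (by omega)]
    refine mul_ge_one _ _ _ _ ⟨k + q, by omega⟩ ?_ ?_
    · rw [pow_one, emT k t s x₁ y₁ x₂ y₂ x₃ y₃ α q hq, h2]
    · exact WTS k t s x₁ y₁ x₂ y₂ x₃ y₃ α (t-1) q (by omega) (by omega) 0 (by omega)

/-- `x₂` at `q` together with `y₂` at `pos ≤ q+2` is impossible. -/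
lemma LF2 (hk : 1 ≤ k) (ht : 3 ≤ t) (hs : 1 ≤ s)
    (hpow : ∀ i j, (A ^ (t+1)) i j = 0 ∨ (A ^ (t+1)) i j = 1)
    (q : ℕ) (hq : q < t) (pos : ℕ) (hpos : pos < t) (hle : pos ≤ q + 2)
    (h1 : x₂ ⟨q, hq⟩ = 1) (h2 : y₂ ⟨pos, hpos⟩ = 1) : False := by
  set p := min (q + 1) (t - 2) with hp
  have hp1 : 1 ≤ p := by omega
  have hpt : p ≤ t - 2 := by omega
  refine not_two k t s x₁ y₁ x₂ y₂ x₃ y₃ α hpow ⟨0, by omega⟩ ⟨k + t + 0, by omega⟩ ?_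
  rw [pow_split A (p+1) (t-p) (t+1) (by omega)]
  refine mul_ge_two _ _ _ _ ⟨k + p, by omega⟩ ⟨k + t + s, by omega⟩
    (by intro h; rw [Fin.mk.injEq] at h; omega) ?_ ?_ ?_ ?_
  · exact WKT k t s x₁ y₁ x₂ y₂ x₃ y₃ α (p+1) p 0 (by omega) (by omega) (by omega) (by omega)
  · exact WTS k t s x₁ y₁ x₂ y₂ x₃ y₃ α (t-p) p (by omega) (by omega) 0 (by omega)
  · rw [pow_split A p 1 (p+1) rfl]
    refine mul_ge_one _ _ _ _ ⟨k + q, by omega⟩ ?_ ?_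
    · exact WKT k t s x₁ y₁ x₂ y₂ x₃ y₃ α p q 0 (by omega) (by omega) (by omega) hq
    · rw [pow_one, eTm k t s x₁ y₁ x₂ y₂ x₃ y₃ α q hq, h1]
  · rw [pow_split A 1 (t-p-1) (t-p) (by omega)]
    refine mul_ge_one _ _ _ _ ⟨k + pos, by omega⟩ ?_ ?_
    · rw [pow_one, emT k t s x₁ y₁ x₂ y₂ x₃ y₃ α pos hpos, h2]
    · exact WTS k t s x₁ y₁ x₂ y₂ x₃ y₃ α (t-p-1) pos (by omega) (by omega) 0 (by omega)

/-- `x₂` at `q ≥ t-2` together with `y₃` is impossible. -/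
lemma LF3 (hk : 1 ≤ k) (ht : 3 ≤ t)
    (hpow : ∀ i j, (A ^ (t+1)) i j = 0 ∨ (A ^ (t+1)) i j = 1)
    (q : ℕ) (hq : q < t) (hge : t ≤ q + 2) (b : ℕ) (hb : b < s)
    (h1 : x₂ ⟨q, hq⟩ = 1) (h2 : y₃ ⟨b, hb⟩ = 1) : False := by
  refine not_two k t s x₁ y₁ x₂ y₂ x₃ y₃ α hpow ⟨0, by omega⟩ ⟨k + t + b, by omega⟩ ?_
  rw [pow_split A t 1 (t+1) (by omega)]
  refine mul_ge_two _ _ _ _ ⟨k + (t-1), by omega⟩ ⟨k + t + s, by omega⟩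
    (by intro h; rw [Fin.mk.injEq] at h; omega) ?_ ?_ ?_ ?_
  · exact WKT k t s x₁ y₁ x₂ y₂ x₃ y₃ α t (t-1) 0 (by omega) (by omega) (by omega) (by omega)
  · rw [pow_one]; exact (eTS k t s x₁ y₁ x₂ y₂ x₃ y₃ α (t-1) b (by omega) hb).ge
  · rw [pow_split A (t-1) 1 t (by omega)]
    refine mul_ge_one _ _ _ _ ⟨k + q, by omega⟩ ?_ ?_
    · exact WKT k t s x₁ y₁ x₂ y₂ x₃ y₃ α (t-1) q 0 (by omega) (by omega) (by omega) hq
    · rw [pow_one, eTm k t s x₁ y₁ x₂ y₂ x₃ y₃ α q hq, h1]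
  · rw [pow_one, emS k t s x₁ y₁ x₂ y₂ x₃ y₃ α b hb, h2]


/-- entry lemmas phrased with an arbitrary `Fin` row/column index. -/
lemma eKm' (i : Fin (k+t+s+1)) (h : (i : ℕ) < k) :
    A i ⟨k + t + s, by omega⟩ = x₁ ⟨i.1, h⟩ :=
  eKm k t s x₁ y₁ x₂ y₂ x₃ y₃ α i.1 h

lemma eTm' (i : Fin (k+t+s+1)) (h1 : k ≤ (i : ℕ)) (h2 : (i : ℕ) < k + t) :
    A i ⟨k + t + s, by omega⟩ = x₂ ⟨(i : ℕ) - k, by omega⟩ := by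
  conv_lhs => rw [show i = (⟨k + ((i : ℕ) - k), by omega⟩ : Fin (k+t+s+1)) from
    Fin.ext (by simp; omega)]
  exact eTm k t s x₁ y₁ x₂ y₂ x₃ y₃ α ((i : ℕ) - k) (by omega)

lemma eSm' (i : Fin (k+t+s+1)) (h1 : k + t ≤ (i : ℕ)) (h2 : (i : ℕ) < k + t + s) :
    A i ⟨k + t + s, by omega⟩ = x₃ ⟨(i : ℕ) - (k + t), by omega⟩ := by
  conv_lhs => rw [show i = (⟨k + t + ((i : ℕ) - (k + t)), by omega⟩ : Fin (k+t+s+1)) from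
    Fin.ext (by simp; omega)]
  exact eSm k t s x₁ y₁ x₂ y₂ x₃ y₃ α ((i : ℕ) - (k + t)) (by omega)

lemma emK' (j : Fin (k+t+s+1)) (h : (j : ℕ) < k) :
    A ⟨k + t + s, by omega⟩ j = y₁ ⟨j.1, h⟩ :=
  emK k t s x₁ y₁ x₂ y₂ x₃ y₃ α j.1 h

lemma emT' (j : Fin (k+t+s+1)) (h1 : k ≤ (j : ℕ)) (h2 : (j : ℕ) < k + t) :
    A ⟨k + t + s, by omega⟩ j = y₂ ⟨(j : ℕ) - k, by omega⟩ := by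
  conv_lhs => rw [show j = (⟨k + ((j : ℕ) - k), by omega⟩ : Fin (k+t+s+1)) from
    Fin.ext (by simp; omega)]
  exact emT k t s x₁ y₁ x₂ y₂ x₃ y₃ α ((j : ℕ) - k) (by omega)

lemma emS' (j : Fin (k+t+s+1)) (h1 : k + t ≤ (j : ℕ)) (h2 : (j : ℕ) < k + t + s) :
    A ⟨k + t + s, by omega⟩ j = y₃ ⟨(j : ℕ) - (k + t), by omega⟩ := by
  conv_lhs => rw [show j = (⟨k + t + ((j : ℕ) - (k + t)), by omega⟩ : Fin (k+t+s+1)) from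
    Fin.ext (by simp; omega)]
  exact emS k t s x₁ y₁ x₂ y₂ x₃ y₃ α ((j : ℕ) - (k + t)) (by omega)

end

lemma fVec_le {n : ℕ} (x : Fin n → ℕ) : fVec x ≤ n :=
  le_trans (Finset.card_filter_le _ _) (by simp)

lemma fVec_eq_zero {n : ℕ} (x : Fin n → ℕ) (h : ∀ i, x i = 0) : fVec x = 0 := by
  unfold fVec
  rw [Finset.card_eq_zero, Finset.filter_eq_empty_iff]
  intro i _
  simp [h i]

lemma fVec_le_one {n : ℕ} (x : Fin n → ℕ)
    (h : ∀ i j, x i = 1 → x j = 1 → i = j) : fVec x ≤ 1 := by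
  unfold fVec
  refine Finset.card_le_one.2 ?_
  intro a ha b hb
  rw [Finset.mem_filter] at ha hb
  exact h a b ha.2 hb.2

end Stmt4Aux
/-- Lemma 4: with `m = k+t+s+1`, `s ≥ 1`, `k ≥ 1`, `t ≥ 3`, if
the above block matrix lies in `Γ(m, t+1)` and
`f(x₁)+f(x₂)+f(x₃)+f(y₁)+f(y₂)+f(y₃)+α ≥ s+k+2`, then `α = 0`, `y₁ = 0`,
`x₃ = 0`, and `a_{i,m}·a_{m,j} = 0` for all `i, j ≤ m−1` with `j ≤ i+2`
(1-indexed). -/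
theorem stmt4 (k t s : ℕ) (hk : 1 ≤ k) (ht : 3 ≤ t) (hs : 1 ≤ s)
    (x₁ y₁ : Fin k → ℕ) (x₂ y₂ : Fin t → ℕ) (x₃ y₃ : Fin s → ℕ) (α : ℕ)
    (hx₁ : ∀ i, x₁ i = 0 ∨ x₁ i = 1) (hy₁ : ∀ i, y₁ i = 0 ∨ y₁ i = 1)
    (hx₂ : ∀ i, x₂ i = 0 ∨ x₂ i = 1) (hy₂ : ∀ i, y₂ i = 0 ∨ y₂ i = 1)
    (hx₃ : ∀ i, x₃ i = 0 ∨ x₃ i = 1) (hy₃ : ∀ i, y₃ i = 0 ∨ y₃ i = 1)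
    (hα : α = 0 ∨ α = 1)
    (hΓ : Gamma (k + t + s + 1) (t + 1) (BlockA k t s x₁ y₁ x₂ y₂ x₃ y₃ α))
    (hsum : s + k + 2 ≤
      fVec x₁ + fVec x₂ + fVec x₃ + fVec y₁ + fVec y₂ + fVec y₃ + α) :
    α = 0 ∧ y₁ = 0 ∧ x₃ = 0 ∧
      ∀ i j : Fin (k + t + s + 1),
        (i : ℕ) < k + t + s → (j : ℕ) < k + t + s → (j : ℕ) ≤ (i : ℕ) + 2 →
        BlockA k t s x₁ y₁ x₂ y₂ x₃ y₃ α i (Fin.last (k + t + s)) *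
          BlockA k t s x₁ y₁ x₂ y₂ x₃ y₃ α (Fin.last (k + t + s)) j = 0 := by
  obtain ⟨-, hpow⟩ := hΓ
  have hx30 : ∀ b : Fin s, x₃ b = 0 := by
    intro b
    rcases hx₃ b with h | h
    · exact h
    · exact (Stmt4Aux.LX3 k t s x₁ y₁ x₂ y₂ x₃ y₃ α hk ht hpow b.1 b.2 h).elim
  have hy10 : ∀ u : Fin k, y₁ u = 0 := by
    intro u
    rcases hy₁ u with h | h
    · exact h
    · exact (Stmt4Aux.LY1 k t s x₁ y₁ x₂ y₂ x₃ y₃ α ht hs hpow u.1 u.2 h).elim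
  have hα0 : α = 0 := by
    rcases hα with h | hα1
    · exact h
    exfalso
    have hfx : fVec x₁ + fVec x₂ ≤ k := by
      by_cases hx2 : ∃ q, x₂ q = 1
      · obtain ⟨q, hq⟩ := hx2
        have h1 : fVec x₁ = 0 := Stmt4Aux.fVec_eq_zero _ (fun u => by
          rcases hx₁ u with h | h
          · exact h
          · exact (Stmt4Aux.LE2 k t s x₁ y₁ x₂ y₂ x₃ y₃ α ht hα1 hpow u.1 u.2 q.1 q.2 h hq).elim)
        have h2 : fVec x₂ ≤ 1 := Stmt4Aux.fVec_le_one _ (fun a b ha hb => by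
          rcases lt_trichotomy a b with h | h | h
          · exact (Stmt4Aux.LE1 k t s x₁ y₁ x₂ y₂ x₃ y₃ α hk ht hα1 hpow a.1 b.1 a.2 b.2 h ha hb).elim
          · exact h
          · exact (Stmt4Aux.LE1 k t s x₁ y₁ x₂ y₂ x₃ y₃ α hk ht hα1 hpow b.1 a.1 b.2 a.2 h hb ha).elim)
        omega
      · push_neg at hx2
        have h2 : fVec x₂ = 0 := Stmt4Aux.fVec_eq_zero _ (fun q => by
          rcases hx₂ q with h | h
          · exact h
          · exact absurd h (hx2 q))
        have h1 := Stmt4Aux.fVec_le x₁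
        omega
    have hfy : fVec y₂ + fVec y₃ ≤ s := by
      by_cases hy2 : ∃ q, y₂ q = 1
      · obtain ⟨q, hq⟩ := hy2
        have h1 : fVec y₃ = 0 := Stmt4Aux.fVec_eq_zero _ (fun b => by
          rcases hy₃ b with h | h
          · exact h
          · exact (Stmt4Aux.LE4 k t s x₁ y₁ x₂ y₂ x₃ y₃ α ht hα1 hpow q.1 q.2 b.1 b.2 hq h).elim)
        have h2 : fVec y₂ ≤ 1 := Stmt4Aux.fVec_le_one _ (fun a b ha hb => by
          rcases lt_trichotomy a b with h | h | h
          · exact (Stmt4Aux.LE3 k t s x₁ y₁ x₂ y₂ x₃ y₃ α ht hs hα1 hpow a.1 b.1 a.2 b.2 h ha hb).elim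
          · exact h
          · exact (Stmt4Aux.LE3 k t s x₁ y₁ x₂ y₂ x₃ y₃ α ht hs hα1 hpow b.1 a.1 b.2 a.2 h hb ha).elim)
        omega
      · push_neg at hy2
        have h2 : fVec y₂ = 0 := Stmt4Aux.fVec_eq_zero _ (fun q => by
          rcases hy₂ q with h | h
          · exact h
          · exact absurd h (hy2 q))
        have h1 := Stmt4Aux.fVec_le y₃
        omega
    have h3 : fVec x₃ = 0 := Stmt4Aux.fVec_eq_zero _ hx30
    have h1 : fVec y₁ = 0 := Stmt4Aux.fVec_eq_zero _ hy10
    omega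
  refine ⟨hα0, funext (fun u => (hy10 u).trans rfl), funext (fun b => (hx30 b).trans rfl), ?_⟩
  intro i j hi hj hij
  rw [show Fin.last (k+t+s) = (⟨k+t+s, Nat.lt_succ_self _⟩ : Fin (k+t+s+1)) from rfl]
  by_cases hik : (i : ℕ) < k
  · by_cases hjk : (j : ℕ) < k
    · rw [Stmt4Aux.emK' k t s x₁ y₁ x₂ y₂ x₃ y₃ α j hjk, hy10, mul_zero]
    · by_cases hjt : (j : ℕ) < k + t
      · rw [Stmt4Aux.eKm' k t s x₁ y₁ x₂ y₂ x₃ y₃ α i hik, Stmt4Aux.emT' k t s x₁ y₁ x₂ y₂ x₃ y₃ α j (by omega) hjt]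
        rcases hx₁ ⟨i.1, hik⟩ with h | h
        · rw [h, zero_mul]
        rcases hy₂ ⟨(j : ℕ) - k, by omega⟩ with h' | h'
        · rw [h', mul_zero]
        exact (Stmt4Aux.LF1 k t s x₁ y₁ x₂ y₂ x₃ y₃ α ht hs hpow i.1 hik ((j : ℕ) - k) (by omega)
          (by omega) h h').elim
      · exact absurd hij (by omega)
  · by_cases hit : (i : ℕ) < k + t
    · rw [Stmt4Aux.eTm' k t s x₁ y₁ x₂ y₂ x₃ y₃ α i (by omega) hit]
      rcases hx₂ ⟨(i : ℕ) - k, by omega⟩ with h | h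
      · rw [h, zero_mul]
      by_cases hjk : (j : ℕ) < k
      · rw [Stmt4Aux.emK' k t s x₁ y₁ x₂ y₂ x₃ y₃ α j hjk, hy10, mul_zero]
      by_cases hjt : (j : ℕ) < k + t
      · rw [Stmt4Aux.emT' k t s x₁ y₁ x₂ y₂ x₃ y₃ α j (by omega) hjt]
        rcases hy₂ ⟨(j : ℕ) - k, by omega⟩ with h' | h'
        · rw [h', mul_zero]
        exact (Stmt4Aux.LF2 k t s x₁ y₁ x₂ y₂ x₃ y₃ α hk ht hs hpow ((i : ℕ) - k) (by omega)
          ((j : ℕ) - k) (by omega) (by omega) h h').elim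
      · rw [Stmt4Aux.emS' k t s x₁ y₁ x₂ y₂ x₃ y₃ α j (by omega) hj]
        rcases hy₃ ⟨(j : ℕ) - (k + t), by omega⟩ with h' | h'
        · rw [h', mul_zero]
        exact (Stmt4Aux.LF3 k t s x₁ y₁ x₂ y₂ x₃ y₃ α hk ht hpow ((i : ℕ) - k) (by omega) (by omega)
          ((j : ℕ) - (k + t)) (by omega) h h').elim
    · rw [Stmt4Aux.eSm' k t s x₁ y₁ x₂ y₂ x₃ y₃ α i (by omega) hi, hx30, zero_mul]
end

section
/- Let n ≥ 6, let x, y ∈ {0,1}^{n−1} and β ∈ {0,1}, and let A be the n×n matrix with top-left (n−1)×(n−1) block T_{n−1}, last column (above the diagonal entry) x, last row (before the diagonal entry) yᵀ, and (n,n)-entry β. If A ∈ Γ(n, n−2) and f(x) + f(y) + β = n−2, then either (1) x = (1,…,1,0)ᵀ (n−2 ones followed by a 0), y = 0 and β = 0, or (2) y = (0,1,…,1)ᵀ (a 0 followed by n−2 ones), x = 0 and β = 0. -/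
/-- The n×n bordered matrix `[[T_{n−1}, x], [yᵀ, β]]`. -/
def Bord (n : ℕ) (x y : Fin (n - 1) → ℕ) (β : ℕ) : Matrix (Fin n) (Fin n) ℕ :=
  fun i j =>
    if hi : (i : ℕ) < n - 1 then
      if hj : (j : ℕ) < n - 1 then (if (i : ℕ) < (j : ℕ) then 1 else 0)
      else x ⟨i, hi⟩
    else
      if hj : (j : ℕ) < n - 1 then y ⟨j, hj⟩ else β

section Aux

lemma split_le {n : ℕ} (A : Matrix (Fin n) (Fin n) ℕ) (s t : ℕ) (u l w : Fin n) :
    (A ^ s) u l * (A ^ t) l w ≤ (A ^ (s + t)) u w := by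
  rw [pow_add, Matrix.mul_apply]
  exact Finset.single_le_sum (f := fun l => (A ^ s) u l * (A ^ t) l w)
    (fun i _ => Nat.zero_le _) (Finset.mem_univ l)

lemma walk_one {n : ℕ} (A : Matrix (Fin n) (Fin n) ℕ) (s t : ℕ) (u l w : Fin n)
    (h1 : 1 ≤ (A ^ s) u l) (h2 : 1 ≤ (A ^ t) l w) : 1 ≤ (A ^ (s + t)) u w :=
  le_trans (by simpa using Nat.mul_le_mul h1 h2) (split_le A s t u l w)

lemma split_pair_le {n : ℕ} (A : Matrix (Fin n) (Fin n) ℕ) (s t : ℕ) (u w l1 l2 : Fin n)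
    (hne : l1 ≠ l2) :
    (A ^ s) u l1 * (A ^ t) l1 w + (A ^ s) u l2 * (A ^ t) l2 w ≤ (A ^ (s + t)) u w := by
  rw [pow_add, Matrix.mul_apply,
    ← Finset.sum_pair (f := fun l => (A ^ s) u l * (A ^ t) l w) hne]
  exact Finset.sum_le_sum_of_subset (Finset.subset_univ _)

lemma two_walks {n : ℕ} (A : Matrix (Fin n) (Fin n) ℕ) (s t : ℕ) (u w l1 l2 : Fin n)
    (hne : l1 ≠ l2) (h1 : 1 ≤ (A ^ s) u l1) (h2 : 1 ≤ (A ^ t) l1 w)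
    (h3 : 1 ≤ (A ^ s) u l2) (h4 : 1 ≤ (A ^ t) l2 w) :
    2 ≤ (A ^ (s + t)) u w := by
  refine le_trans ?_ (split_pair_le A s t u w l1 l2 hne)
  have a := Nat.mul_le_mul h1 h2
  have b := Nat.mul_le_mul h3 h4
  omega

lemma walk_one' {n : ℕ} (A : Matrix (Fin n) (Fin n) ℕ) (k s t : ℕ) (hk : k = s + t)
    (u l w : Fin n) (h1 : 1 ≤ (A ^ s) u l) (h2 : 1 ≤ (A ^ t) l w) :
    1 ≤ (A ^ k) u w := by
  subst hk; exact walk_one A s t u l w h1 h2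

lemma two_walks' {n : ℕ} (A : Matrix (Fin n) (Fin n) ℕ) (k s t : ℕ) (hk : k = s + t)
    (u w l1 l2 : Fin n)
    (hne : l1 ≠ l2) (h1 : 1 ≤ (A ^ s) u l1) (h2 : 1 ≤ (A ^ t) l1 w)
    (h3 : 1 ≤ (A ^ s) u l2) (h4 : 1 ≤ (A ^ t) l2 w) :
    2 ≤ (A ^ k) u w := by
  subst hk; exact two_walks A s t u w l1 l2 hne h1 h2 h3 h4

/-- embedding of `Fin (n-1)` into `Fin n`. -/
def emb {n : ℕ} (i : Fin (n - 1)) : Fin n := ⟨i.1, lt_of_lt_of_le i.2 (Nat.sub_le n 1)⟩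

@[simp] lemma emb_val {n : ℕ} (i : Fin (n - 1)) : ((emb i : Fin n) : ℕ) = (i : ℕ) := rfl

variable {n : ℕ} {x y : Fin (n - 1) → ℕ} {β : ℕ}

lemma bord_chain_entry (u v : Fin n) (h1 : (u : ℕ) < v) (h2 : (v : ℕ) < n - 1) :
    Bord n x y β u v = 1 := by
  unfold Bord
  rw [dif_pos (lt_trans h1 h2), dif_pos h2, if_pos h1]

lemma bord_x_entry (u v : Fin n) (hu : (u : ℕ) < n - 1) (hv : ¬ (v : ℕ) < n - 1) :
    Bord n x y β u v = x ⟨u, hu⟩ := by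
  unfold Bord; rw [dif_pos hu, dif_neg hv]

lemma bord_y_entry (u v : Fin n) (hu : ¬ (u : ℕ) < n - 1) (hv : (v : ℕ) < n - 1) :
    Bord n x y β u v = y ⟨v, hv⟩ := by
  unfold Bord; rw [dif_neg hu, dif_pos hv]

lemma bord_beta_entry (u v : Fin n) (hu : ¬ (u : ℕ) < n - 1) (hv : ¬ (v : ℕ) < n - 1) :
    Bord n x y β u v = β := by
  unfold Bord; rw [dif_neg hu, dif_neg hv]

lemma bord_x_entry' (i : Fin (n - 1)) (v : Fin n) (hv : ¬ (v : ℕ) < n - 1) :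
    Bord n x y β (emb i) v = x i := by
  rw [bord_x_entry (emb i) v i.2 hv]; rfl

lemma bord_y_entry' (u : Fin n) (j : Fin (n - 1)) (hu : ¬ (u : ℕ) < n - 1) :
    Bord n x y β u (emb j) = y j := by
  rw [bord_y_entry u (emb j) hu j.2]; rfl

/-- Walks of length ℓ inside the chain: exist whenever `u + ℓ ≤ v`
(with `ℓ = 0` only allowed for `u = v`). -/
lemma bord_chain : ∀ (ℓ : ℕ) (u v : Fin n), (u : ℕ) + ℓ ≤ (v : ℕ) → (v : ℕ) ≤ n - 2 →
    (ℓ = 0 → (u : ℕ) = (v : ℕ)) → 1 ≤ ((Bord n x y β) ^ ℓ) u v := by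
  intro ℓ
  induction ℓ with
  | zero =>
    intro u v _ _ h0
    have : u = v := Fin.ext (h0 rfl)
    subst this
    simp [Matrix.one_apply_eq]
  | succ m ih =>
    intro u v h1 h2 _
    rcases Nat.eq_zero_or_pos m with hm | hm
    · subst hm
      rw [pow_one, bord_chain_entry u v (by omega) (by omega)]
    · have hu' : (u : ℕ) + 1 < n := by omega
      have key := walk_one (Bord n x y β) 1 m u ⟨(u : ℕ) + 1, hu'⟩ v ?_ ?_
      · rwa [show 1 + m = m + 1 by omega] at key
      · rw [pow_one, bord_chain_entry u ⟨(u : ℕ) + 1, hu'⟩ (by simp) (by simp; omega)]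
      · exact ih ⟨(u : ℕ) + 1, hu'⟩ v (by simp; omega) h2 (by omega)

lemma bord_loop (hb : β = 1) (last : Fin n) (hlast : (last : ℕ) = n - 1) (hn : 1 ≤ n) :
    ∀ t : ℕ, 1 ≤ ((Bord n x y β) ^ t) last last := by
  intro t
  induction t with
  | zero => simp [Matrix.one_apply_eq]
  | succ m ih =>
    exact walk_one (Bord n x y β) m 1 last last last ih
      (by rw [pow_one, bord_beta_entry last last (by omega) (by omega), hb])

lemma fVec_exists {m : ℕ} {x : Fin m → ℕ} (h : 1 ≤ fVec x) : ∃ i, x i = 1 := by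
  unfold fVec at h
  obtain ⟨i, hi⟩ := Finset.card_pos.mp h
  exact ⟨i, (Finset.mem_filter.mp hi).2⟩

lemma fVec_zero {m : ℕ} {x : Fin m → ℕ} (hx : ∀ i, x i = 0 ∨ x i = 1)
    (h : fVec x = 0) : ∀ i, x i = 0 := by
  unfold fVec at h
  intro i
  rcases hx i with h0 | h1
  · exact h0
  · exfalso
    have : i ∈ Finset.univ.filter (fun i => x i = 1) :=
      Finset.mem_filter.mpr ⟨Finset.mem_univ _, h1⟩
    have := Finset.card_pos.mpr ⟨i, this⟩
    omega

lemma fVec_two {m : ℕ} {x : Fin m → ℕ} (h : 2 ≤ fVec x) :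
    ∃ i1 i2 : Fin m, (i1 : ℕ) < (i2 : ℕ) ∧ x i1 = 1 ∧ x i2 = 1 := by
  unfold fVec at h
  have h2 : 1 < (Finset.univ.filter (fun i => x i = 1)).card := by omega
  obtain ⟨a, ha, b, hb, hab⟩ := Finset.one_lt_card.mp h2
  have hxa := (Finset.mem_filter.mp ha).2
  have hxb := (Finset.mem_filter.mp hb).2
  rcases lt_or_gt_of_ne (fun h => hab (Fin.ext h) : (a : ℕ) ≠ (b : ℕ)) with h | h
  · exact ⟨a, b, h, hxa, hxb⟩
  · exact ⟨b, a, h, hxb, hxa⟩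

end Aux

/-- Corollary: if `n ≥ 6`, `A = [[T_{n−1}, x],[yᵀ, β]] ∈ Γ(n, n−2)`
and `f(x)+f(y)+β = n−2`, then either `x = (1,…,1,0)ᵀ, y = 0, β = 0`, or
`y = (0,1,…,1)ᵀ, x = 0, β = 0`. -/
theorem stmt5 (n : ℕ) (hn : 6 ≤ n) (x y : Fin (n - 1) → ℕ) (β : ℕ)
    (hx : ∀ i, x i = 0 ∨ x i = 1) (hy : ∀ i, y i = 0 ∨ y i = 1)
    (hβ : β = 0 ∨ β = 1)
    (hΓ : Gamma n (n - 2) (Bord n x y β))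
    (hsum : fVec x + fVec y + β = n - 2) :
    ((∀ i : Fin (n - 1), x i = if (i : ℕ) < n - 2 then 1 else 0) ∧ y = 0 ∧ β = 0) ∨
    ((∀ i : Fin (n - 1), y i = if (i : ℕ) = 0 then 0 else 1) ∧ x = 0 ∧ β = 0) := by
  classical
  have hAk := hΓ.2
  -- named vertices
  have h0n : (0 : ℕ) < n := by omega
  have p1 : 1 < n := by omega
  have p2 : 2 < n := by omega
  have hlastn : n - 1 < n := by omega
  set last : Fin n := ⟨n - 1, hlastn⟩ with hlastdef
  have hlastval : (last : ℕ) = n - 1 := rfl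
  have hnotlt : ¬ ((last : ℕ) < n - 1) := by omega
  -- no entry of B^(n-2) is ≥ 2
  have no2 : ∀ u w : Fin n, 2 ≤ (Bord n x y β ^ (n - 2)) u w → False := by
    intro u w h
    rcases hAk u w with h' | h' <;> omega
  -- index of last coordinate of x
  have hn2 : n - 2 < n - 1 := by omega
  -- ===== Step A : x (n-2) = 0 =====
  have stepA : x ⟨n - 2, hn2⟩ = 0 := by
    rcases hx ⟨n - 2, hn2⟩ with h | h
    · exact h
    exfalso
    -- two walks of length n-2 from 0 to `last`, skipping vertex 2 or vertex 1
    have hEnd : 1 ≤ (Bord n x y β ^ 1) (emb ⟨n - 2, hn2⟩) last := by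
      rw [pow_one, bord_x_entry' ⟨n - 2, hn2⟩ last hnotlt, h]
    have w1 : 1 ≤ (Bord n x y β ^ (n - 3)) (⟨1, p1⟩ : Fin n) last := by
      have hc : 1 ≤ (Bord n x y β ^ (n - 4)) (⟨1, p1⟩ : Fin n) (emb ⟨n - 2, hn2⟩) :=
        bord_chain (n - 4) _ _ (by show 1 + (n - 4) ≤ n - 2; omega)
          (by show (n : ℕ) - 2 ≤ n - 2; omega) (by omega)
      exact walk_one' (Bord n x y β) (n - 3) (n - 4) 1 (by omega) _ _ _ hc hEnd
    have w2 : 1 ≤ (Bord n x y β ^ (n - 3)) (⟨2, p2⟩ : Fin n) last := by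
      have hc : 1 ≤ (Bord n x y β ^ (n - 4)) (⟨2, p2⟩ : Fin n) (emb ⟨n - 2, hn2⟩) :=
        bord_chain (n - 4) _ _ (by show 2 + (n - 4) ≤ n - 2; omega)
          (by show (n : ℕ) - 2 ≤ n - 2; omega) (by omega)
      exact walk_one' (Bord n x y β) (n - 3) (n - 4) 1 (by omega) _ _ _ hc hEnd
    have s1 : 1 ≤ (Bord n x y β ^ 1) (⟨0, h0n⟩ : Fin n) (⟨1, p1⟩ : Fin n) := by
      rw [pow_one, bord_chain_entry (⟨0, h0n⟩ : Fin n) (⟨1, p1⟩ : Fin n)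
        (by show (0:ℕ) < 1; omega) (by show (1:ℕ) < n - 1; omega)]
    have s2 : 1 ≤ (Bord n x y β ^ 1) (⟨0, h0n⟩ : Fin n) (⟨2, p2⟩ : Fin n) := by
      rw [pow_one, bord_chain_entry (⟨0, h0n⟩ : Fin n) (⟨2, p2⟩ : Fin n)
        (by show (0:ℕ) < 2; omega) (by show (2:ℕ) < n - 1; omega)]
    have h2 := two_walks' (Bord n x y β) (n - 2) 1 (n - 3) (by omega) ⟨0, h0n⟩ last
      ⟨1, p1⟩ ⟨2, p2⟩ (Fin.ne_of_val_ne (by show (1:ℕ) ≠ 2; omega)) s1 w1 s2 w2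
    exact no2 _ _ h2
  -- ===== Step B : y 0 = 0 =====
  have h0n1 : (0 : ℕ) < n - 1 := by omega
  have stepB : y ⟨0, h0n1⟩ = 0 := by
    rcases hy ⟨0, h0n1⟩ with h | h
    · exact h
    exfalso
    have hStart : 1 ≤ (Bord n x y β ^ 1) last (emb ⟨0, h0n1⟩) := by
      rw [pow_one, bord_y_entry' last ⟨0, h0n1⟩ hnotlt, h]
    have s1 : 1 ≤ (Bord n x y β ^ 2) last (⟨1, p1⟩ : Fin n) := by
      have : 1 ≤ (Bord n x y β ^ 1) (emb ⟨0, h0n1⟩) (⟨1, p1⟩ : Fin n) := by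
        rw [pow_one, bord_chain_entry (emb ⟨0, h0n1⟩) (⟨1, p1⟩ : Fin n)
          (by show (0:ℕ) < 1; omega) (by show (1:ℕ) < n - 1; omega)]
      exact walk_one' (Bord n x y β) 2 1 1 (by omega) _ _ _ hStart this
    have s2 : 1 ≤ (Bord n x y β ^ 2) last (⟨2, p2⟩ : Fin n) := by
      have : 1 ≤ (Bord n x y β ^ 1) (emb ⟨0, h0n1⟩) (⟨2, p2⟩ : Fin n) := by
        rw [pow_one, bord_chain_entry (emb ⟨0, h0n1⟩) (⟨2, p2⟩ : Fin n)
          (by show (0:ℕ) < 2; omega) (by show (2:ℕ) < n - 1; omega)]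
      exact walk_one' (Bord n x y β) 2 1 1 (by omega) _ _ _ hStart this
    have w1 : 1 ≤ (Bord n x y β ^ (n - 4)) (⟨1, p1⟩ : Fin n) (emb ⟨n - 2, hn2⟩) :=
      bord_chain (n - 4) _ _ (by show 1 + (n - 4) ≤ n - 2; omega)
        (by show (n : ℕ) - 2 ≤ n - 2; omega) (by omega)
    have w2 : 1 ≤ (Bord n x y β ^ (n - 4)) (⟨2, p2⟩ : Fin n) (emb ⟨n - 2, hn2⟩) :=
      bord_chain (n - 4) _ _ (by show 2 + (n - 4) ≤ n - 2; omega)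
        (by show (n : ℕ) - 2 ≤ n - 2; omega) (by omega)
    have h2 := two_walks' (Bord n x y β) (n - 2) 2 (n - 4) (by omega) last (emb ⟨n - 2, hn2⟩)
      ⟨1, p1⟩ ⟨2, p2⟩ (Fin.ne_of_val_ne (by show (1:ℕ) ≠ 2; omega)) s1 w1 s2 w2
    exact no2 _ _ h2
  -- ===== Step C : β = 0 =====
  have stepC : β = 0 := by
    rcases hβ with h | h
    · exact h
    exfalso
    have hloop := bord_loop (x := x) (y := y) h last hlastval (by omega)
    have hab : fVec x + fVec y = n - 3 := by omega
    have : 2 ≤ fVec x ∨ 2 ≤ fVec y := by omega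
    rcases this with h2x | h2y
    · obtain ⟨i1, i2, hlt, h1, h2⟩ := fVec_two h2x
      -- two walks from i1 to last : directly + loops, or via i2 + loops
      have wa : 1 ≤ (Bord n x y β ^ 1) (emb i1) last := by
        rw [pow_one, bord_x_entry' i1 last hnotlt, h1]
      have wb : 1 ≤ (Bord n x y β ^ (n - 3)) last last := hloop _
      have wc : 1 ≤ (Bord n x y β ^ 1) (emb i1) (emb i2) := by
        rw [pow_one, bord_chain_entry (emb i1) (emb i2)
          (by simpa using hlt) (by simpa using i2.2)]
      have wd : 1 ≤ (Bord n x y β ^ (n - 3)) (emb i2) last := by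
        have h1' : 1 ≤ (Bord n x y β ^ 1) (emb i2) last := by
          rw [pow_one, bord_x_entry' i2 last hnotlt, h2]
        exact walk_one' (Bord n x y β) (n - 3) 1 (n - 4) (by omega) _ _ _ h1' (hloop _)
      have h2' := two_walks' (Bord n x y β) (n - 2) 1 (n - 3) (by omega) (emb i1) last
        last (emb i2)
        (by refine Fin.ne_of_val_ne ?_; have := i2.2; simp [hlastval]; omega) wa wb wc wd
      exact no2 _ _ h2'
    · obtain ⟨j1, j2, hlt, h1, h2⟩ := fVec_two h2y
      have wa : 1 ≤ (Bord n x y β ^ (n - 3)) last last := hloop _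
      have wb : 1 ≤ (Bord n x y β ^ 1) last (emb j2) := by
        rw [pow_one, bord_y_entry' last j2 hnotlt, h2]
      have wc : 1 ≤ (Bord n x y β ^ (n - 3)) last (emb j1) := by
        have h1' : 1 ≤ (Bord n x y β ^ 1) last (emb j1) := by
          rw [pow_one, bord_y_entry' last j1 hnotlt, h1]
        exact walk_one' (Bord n x y β) (n - 3) (n - 4) 1 (by omega) _ _ _ (hloop _) h1'
      have wd : 1 ≤ (Bord n x y β ^ 1) (emb j1) (emb j2) := by
        rw [pow_one, bord_chain_entry (emb j1) (emb j2)
          (by simpa using hlt) (by simpa using j2.2)]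
      have h2' := two_walks' (Bord n x y β) (n - 2) (n - 3) 1 (by omega) last (emb j2)
        last (emb j1)
        (by refine Fin.ne_of_val_ne ?_; have := j1.2; simp [hlastval]; omega) wa wb wc wd
      exact no2 _ _ h2'
  -- ===== Step D : not both x and y have a one =====
  have stepD : fVec x = 0 ∨ fVec y = 0 := by
    by_contra hcon
    push_neg at hcon
    obtain ⟨hxpos, hypos⟩ := hcon
    obtain ⟨i0, hxi0⟩ := fVec_exists (Nat.one_le_iff_ne_zero.mpr hxpos)
    obtain ⟨j0, hyj0⟩ := fVec_exists (Nat.one_le_iff_ne_zero.mpr hypos)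
    by_cases hclose : ∃ (i : Fin (n-1)) (j : Fin (n-1)),
        x i = 1 ∧ y j = 1 ∧ (j : ℕ) ≤ (i : ℕ) + 2
    · -- two walks from 0 to n-2 : the full chain, or through `last`
      obtain ⟨i, j, hxi, hyj, hij⟩ := hclose
      have hiub : (i : ℕ) ≤ n - 3 := by
        have : (i : ℕ) ≠ n - 2 := by
          intro hh
          have : i = ⟨n - 2, hn2⟩ := Fin.ext hh
          rw [this, stepA] at hxi; omega
        have := i.2; omega
      have hjlb : 1 ≤ (j : ℕ) := by
        have : (j : ℕ) ≠ 0 := by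
          intro hh
          have : j = ⟨0, h0n1⟩ := Fin.ext hh
          rw [this, stepB] at hyj; omega
        omega
      have hjub : (j : ℕ) ≤ n - 2 := by have := j.2; omega
      set ℓ : ℕ := max (min (i : ℕ) 1) ((j : ℕ) - 2) with hℓdef
      have hℓi : ℓ ≤ (i : ℕ) := by omega
      have hℓub : ℓ ≤ n - 4 := by omega
      have pℓ : ℓ + 1 < n := by omega
      -- walk 1: pure chain, position ℓ+1 after ℓ+1 steps
      have w1a : 1 ≤ (Bord n x y β ^ (ℓ + 1)) (⟨0, h0n⟩ : Fin n) (⟨ℓ + 1, pℓ⟩ : Fin n) :=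
        bord_chain (ℓ + 1) _ _ (by show 0 + (ℓ + 1) ≤ ℓ + 1; omega)
          (by show ℓ + 1 ≤ n - 2; omega) (by omega)
      have w1b : 1 ≤ (Bord n x y β ^ (n - 3 - ℓ)) (⟨ℓ + 1, pℓ⟩ : Fin n) (emb ⟨n - 2, hn2⟩) :=
        bord_chain (n - 3 - ℓ) _ _ (by show (ℓ + 1) + (n - 3 - ℓ) ≤ n - 2; omega)
          (by show (n : ℕ) - 2 ≤ n - 2; omega) (by omega)
      -- walk 2: chain to i, jump to last, back to j, chain to n-2
      have w2a : 1 ≤ (Bord n x y β ^ (ℓ + 1)) (⟨0, h0n⟩ : Fin n) last := by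
        have hc : 1 ≤ (Bord n x y β ^ ℓ) (⟨0, h0n⟩ : Fin n) (emb i) :=
          bord_chain ℓ _ _ (by show 0 + ℓ ≤ (i : ℕ); omega)
            (by show (i : ℕ) ≤ n - 2; omega) (by show ℓ = 0 → 0 = (i : ℕ); omega)
        have hs : 1 ≤ (Bord n x y β ^ 1) (emb i) last := by
          rw [pow_one, bord_x_entry' i last hnotlt, hxi]
        exact walk_one (Bord n x y β) ℓ 1 _ _ _ hc hs
      have w2b : 1 ≤ (Bord n x y β ^ (n - 3 - ℓ)) last (emb ⟨n - 2, hn2⟩) := by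
        have hs : 1 ≤ (Bord n x y β ^ 1) last (emb j) := by
          rw [pow_one, bord_y_entry' last j hnotlt, hyj]
        have hc : 1 ≤ (Bord n x y β ^ (n - 4 - ℓ)) (emb j) (emb ⟨n - 2, hn2⟩) :=
          bord_chain (n - 4 - ℓ) _ _ (by show (j : ℕ) + (n - 4 - ℓ) ≤ n - 2; omega)
            (by show (n : ℕ) - 2 ≤ n - 2; omega)
            (by show n - 4 - ℓ = 0 → (j : ℕ) = n - 2; omega)
        exact walk_one' (Bord n x y β) (n - 3 - ℓ) 1 (n - 4 - ℓ) (by omega) _ _ _ hs hc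
      have h2 := two_walks' (Bord n x y β) (n - 2) (ℓ + 1) (n - 3 - ℓ) (by omega)
        ⟨0, h0n⟩ (emb ⟨n - 2, hn2⟩)
        ⟨ℓ + 1, pℓ⟩ last (Fin.ne_of_val_ne (by show ℓ + 1 ≠ n - 1; omega))
        w1a w1b w2a w2b
      exact no2 _ _ h2
    · -- far apart: counting contradiction
      push_neg at hclose
      set Sx := Finset.univ.filter (fun i => x i = 1) with hSx
      set Sy := Finset.univ.filter (fun j => y j = 1) with hSy
      have hSxne : Sx.Nonempty := ⟨i0, Finset.mem_filter.mpr ⟨Finset.mem_univ _, hxi0⟩⟩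
      set im : Fin (n - 1) := Sx.max' hSxne with him
      have himx : x im = 1 := (Finset.mem_filter.mp (Sx.max'_mem hSxne)).2
      have hj0far : (im : ℕ) + 2 < (j0 : ℕ) := hclose im j0 himx hyj0
      have hj0ub : (j0 : ℕ) ≤ n - 2 := by have := j0.2; omega
      -- card Sx ≤ im + 1
      have hcard1 : fVec x ≤ (im : ℕ) + 1 := by
        have : Sx.card ≤ (Finset.range ((im : ℕ) + 1)).card := by
          refine Finset.card_le_card_of_injOn (β := ℕ) (fun i => (i : ℕ)) ?_ ?_
          · intro a ha
            have := Sx.le_max' a ha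
            simp only [Finset.mem_coe, Finset.mem_range]
            omega
          · intro a _ b _ hab
            exact Fin.ext hab
        simpa [fVec, hSx] using this
      -- card Sy ≤ n - 4 - im
      have hcard2 : fVec y ≤ n - 4 - (im : ℕ) := by
        have : Sy.card ≤ (Finset.range (n - 4 - (im : ℕ))).card := by
          refine Finset.card_le_card_of_injOn (β := ℕ) (fun j => (j : ℕ) - ((im : ℕ) + 3)) ?_ ?_
          · intro a ha
            have hfar := hclose im a himx (Finset.mem_filter.mp ha).2
            have := a.2
            simp only [Finset.mem_coe, Finset.mem_range]
            omega
          · intro a ha b hb hab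
            have hfa := hclose im a himx (Finset.mem_filter.mp ha).2
            have hfb := hclose im b himx (Finset.mem_filter.mp hb).2
            simp only at hab
            exact Fin.ext (by omega)
        simpa [fVec, hSy] using this
      omega
  -- ===== conclusion =====
  rcases stepD with hx0 | hy0
  · -- x = 0, y is all ones except position 0
    right
    have hxall := fVec_zero hx hx0
    have hyv : fVec y = n - 2 := by omega
    constructor
    · intro i
      by_cases hi : (i : ℕ) = 0
      · rw [if_pos hi]
        have : i = ⟨0, h0n1⟩ := Fin.ext hi
        rw [this, stepB]
      · rw [if_neg hi]
        rcases hy i with h0 | h1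
        · exfalso
          -- y has n-2 ones among n-1 entries, with positions 0 and i zero
          have hne : i ≠ ⟨0, h0n1⟩ := fun hh => hi (by rw [hh])
          have hsub : Finset.univ.filter (fun j => y j = 1) ⊆
              (Finset.univ.erase (⟨0, h0n1⟩ : Fin (n - 1))).erase i := by
            intro z hz
            have hz1 := (Finset.mem_filter.mp hz).2
            refine Finset.mem_erase.mpr ⟨?_, Finset.mem_erase.mpr ⟨?_, Finset.mem_univ _⟩⟩
            · intro hh; rw [hh, h0] at hz1; omega
            · intro hh; rw [hh, stepB] at hz1; omega
          have hcard := Finset.card_le_card hsub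
          rw [Finset.card_erase_of_mem (Finset.mem_erase.mpr ⟨hne, Finset.mem_univ _⟩),
            Finset.card_erase_of_mem (Finset.mem_univ _), Finset.card_univ,
            Fintype.card_fin] at hcard
          have : fVec y ≤ n - 1 - 1 - 1 := hcard
          omega
        · exact h1
    · exact ⟨funext hxall, stepC⟩
  · -- y = 0, x is all ones except last position
    left
    have hyall := fVec_zero hy hy0
    have hxv : fVec x = n - 2 := by omega
    constructor
    · intro i
      by_cases hi : (i : ℕ) < n - 2
      · rw [if_pos hi]
        rcases hx i with h0 | h1
        · exfalso
          have hne : i ≠ ⟨n - 2, hn2⟩ := Fin.ne_of_val_ne (by show (i : ℕ) ≠ n - 2; omega)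
          have hsub : Finset.univ.filter (fun j => x j = 1) ⊆
              (Finset.univ.erase (⟨n - 2, hn2⟩ : Fin (n - 1))).erase i := by
            intro z hz
            have hz1 := (Finset.mem_filter.mp hz).2
            refine Finset.mem_erase.mpr ⟨?_, Finset.mem_erase.mpr ⟨?_, Finset.mem_univ _⟩⟩
            · intro hh; rw [hh, h0] at hz1; omega
            · intro hh; rw [hh, stepA] at hz1; omega
          have hcard := Finset.card_le_card hsub
          rw [Finset.card_erase_of_mem (Finset.mem_erase.mpr ⟨hne, Finset.mem_univ _⟩),
            Finset.card_erase_of_mem (Finset.mem_univ _), Finset.card_univ,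
            Fintype.card_fin] at hcard
          have : fVec x ≤ n - 1 - 1 - 1 := hcard
          omega
        · exact h1
      · rw [if_neg hi]
        have : i = ⟨n - 2, hn2⟩ := Fin.ext (by show (i : ℕ) = n - 2; have := i.2; omega)
        rw [this, stepA]
    · exact ⟨funext hyall, stepC⟩
end

section
/- Let k ≥ 5 and s ≥ 1 be integers, let x_1,…,x_s, y_1,…,y_s ∈ {0,1}^k, and let A be the (k+s)×(k+s) 0-1 matrix whose top-left k×k block is T_k, whose (k+j)-th column restricted to the first k rows is x_j (1 ≤ j ≤ s), whose (k+j)-th row restricted to the first k columns is y_jᵀ (1 ≤ j ≤ s), and whose bottom-right s×s block C satisfies C_{i,i+1} = 1 for 1 ≤ i ≤ s−1, C_{s,1} = 1, and all other entries of C are 0. If there exists i ∈ {1,…,s} such that f(x_i) ≥ 3 or f(y_i) ≥ 3, then A ∉ Γ(k+s, p) for every integer p ≥ 2. -/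
/-- The (k+s)×(k+s) matrix with top-left block `T_k`, bordered columns
`x_1, …, x_s`, bordered rows `y_1ᵀ, …, y_sᵀ`, and bottom-right s×s block the
directed cycle: `C_{a,a+1} = 1` (1 ≤ a ≤ s−1), `C_{s,1} = 1`, all other
entries 0. -/
def CycA (k s : ℕ) (x y : Fin s → Fin k → ℕ) :
    Matrix (Fin (k + s)) (Fin (k + s)) ℕ :=
  fun i j =>
    if hi : (i : ℕ) < k then
      if hj : (j : ℕ) < k then (if (i : ℕ) < (j : ℕ) then 1 else 0)
      else x ⟨(j : ℕ) - k, by have := j.isLt; omega⟩ ⟨i, hi⟩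
    else
      if hj : (j : ℕ) < k then y ⟨(i : ℕ) - k, by have := i.isLt; omega⟩ ⟨j, hj⟩
      else if ((j : ℕ) - k = (i : ℕ) - k + 1) ∨
              ((i : ℕ) - k = s - 1 ∧ (j : ℕ) - k = 0) then 1 else 0

/- ## Auxiliary definitions and lemmas -/

def tnode (k s : ℕ) (a : Fin k) : Fin (k + s) := ⟨a.val, by have := a.isLt; omega⟩

def bnode (k s : ℕ) (hs : 0 < s) (r : ℕ) : Fin (k + s) :=
  ⟨k + r % s, by have := Nat.mod_lt r hs; omega⟩

section entries
variable {k s : ℕ} (hs : 0 < s) (x y : Fin s → Fin k → ℕ)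

lemma cycA_tt (a b : Fin k) (hab : a < b) :
    CycA k s x y (tnode k s a) (tnode k s b) = 1 := by
  unfold CycA tnode
  rw [dif_pos a.isLt, dif_pos b.isLt, if_pos (show (a:ℕ) < (b:ℕ) from hab)]

lemma cycA_tb (a : Fin k) (i : Fin s) :
    CycA k s x y (tnode k s a) (bnode k s hs i.val) = x i a := by
  unfold CycA tnode bnode
  rw [dif_pos a.isLt, dif_neg (by simp)]
  have h1 : (⟨k + i.val % s - k, by have := Nat.mod_lt i.val hs; omega⟩ : Fin s) = i := by
    ext; simp [Nat.mod_eq_of_lt i.isLt]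
  simp only [h1]

lemma cycA_bt (a : Fin k) (i : Fin s) :
    CycA k s x y (bnode k s hs i.val) (tnode k s a) = y i a := by
  unfold CycA tnode bnode
  rw [dif_neg (by simp), dif_pos a.isLt]
  have h1 : (⟨k + i.val % s - k, by have := Nat.mod_lt i.val hs; omega⟩ : Fin s) = i := by
    ext; simp [Nat.mod_eq_of_lt i.isLt]
  simp only [h1]

lemma cycA_cyc (r : ℕ) :
    CycA k s x y (bnode k s hs r) (bnode k s hs (r + 1)) = 1 := by
  unfold CycA bnode
  rw [dif_neg (by simp), dif_neg (by simp)]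
  have hr : r % s < s := Nat.mod_lt r hs
  have key : (r + 1) % s = (r % s + 1) % s := by
    conv_lhs => rw [Nat.add_mod]
    conv_rhs => rw [Nat.add_mod]
    simp [Nat.mod_mod_of_dvd]
  rw [if_pos]
  simp only [Nat.add_sub_cancel_left]
  by_cases h : r % s + 1 = s
  · right
    constructor
    · omega
    · simp only [Nat.add_sub_cancel_left, key, h, Nat.mod_self]
  · left
    simp only [Nat.add_sub_cancel_left, key]
    rw [Nat.mod_eq_of_lt (by omega)]

end entries

lemma term_le_sum {n : ℕ} (f : Fin n → ℕ) (t : Fin n) : f t ≤ ∑ u, f u :=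
  Finset.single_le_sum (fun _ _ => Nat.zero_le _) (Finset.mem_univ t)

lemma two_le_sum {n : ℕ} (f : Fin n → ℕ) (b c : Fin n) (hbc : b ≠ c)
    (hb : 1 ≤ f b) (hc : 1 ≤ f c) : 2 ≤ ∑ t, f t :=
  calc 2 ≤ f b + f c := by omega
    _ = ∑ t ∈ ({b, c} : Finset (Fin n)), f t := (Finset.sum_pair hbc).symm
    _ ≤ ∑ t, f t := Finset.sum_le_sum_of_subset (Finset.subset_univ _)

lemma walk_pow {n : ℕ} (A : Matrix (Fin n) (Fin n) ℕ) (g : ℕ → Fin n)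
    (hg : ∀ t, A (g t) (g (t + 1)) = 1) :
    ∀ m r : ℕ, 1 ≤ (A ^ m) (g r) (g (r + m)) := by
  intro m
  induction m with
  | zero => intro r; simp [Matrix.one_apply_eq]
  | succ m ih =>
    intro r
    rw [pow_succ, Matrix.mul_apply]
    calc 1 = 1 * 1 := rfl
      _ ≤ (A ^ m) (g r) (g (r + m)) * A (g (r + m)) (g (r + m + 1)) :=
          Nat.mul_le_mul (ih r) (le_of_eq (hg (r + m)).symm)
      _ ≤ ∑ t, (A ^ m) (g r) t * A t (g (r + m + 1)) :=
          term_le_sum (fun t => (A ^ m) (g r) t * A t (g (r + m + 1))) (g (r + m))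

lemma exists_three {α : Type*} [LinearOrder α] {S : Finset α} (h : 3 ≤ S.card) :
    ∃ a b c, a ∈ S ∧ b ∈ S ∧ c ∈ S ∧ a < b ∧ b < c := by
  obtain ⟨a, b, c, ha, hb, hc, hab, hac, hbc⟩ := (Finset.two_lt_card_iff (s := S)).mp (by omega)
  rcases hab.lt_or_gt with h1 | h1
  · rcases lt_trichotomy c a with h2 | h2 | h2
    · exact ⟨c, a, b, hc, ha, hb, h2, h1⟩
    · exact absurd h2.symm hac
    · rcases lt_trichotomy c b with h3 | h3 | h3
      · exact ⟨a, c, b, ha, hc, hb, h2, h3⟩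
      · exact absurd h3 hbc.symm
      · exact ⟨a, b, c, ha, hb, hc, h1, h3⟩
  · rcases lt_trichotomy c b with h2 | h2 | h2
    · exact ⟨c, b, a, hc, hb, ha, h2, h1⟩
    · exact absurd h2 hbc.symm
    · rcases lt_trichotomy c a with h3 | h3 | h3
      · exact ⟨b, c, a, hb, hc, ha, h2, h3⟩
      · exact absurd h3.symm hac
      · exact ⟨b, a, c, hb, ha, hc, h1, h3⟩

/-- Lemma (i): for `k ≥ 5`, `s ≥ 1`, if some `x_i` or `y_i`
has at least three ones, then the above matrix is not in `Γ(k+s, p)` for any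
`p ≥ 2`. -/
theorem stmt13 (k s : ℕ) (hk : 5 ≤ k) (hs : 1 ≤ s)
    (x y : Fin s → Fin k → ℕ)
    (hx : ∀ i j, x i j = 0 ∨ x i j = 1) (hy : ∀ i j, y i j = 0 ∨ y i j = 1)
    (hbig : ∃ i : Fin s, 3 ≤ fVec (x i) ∨ 3 ≤ fVec (y i)) :
    ∀ p : ℕ, 2 ≤ p → ¬ Gamma (k + s) p (CycA k s x y) := by
  intro p hp hG
  obtain ⟨h01, hpow⟩ := hG
  have hs0 : 0 < s := hs
  have walk : ∀ m r : ℕ, 1 ≤ ((CycA k s x y) ^ m) (bnode k s hs0 r) (bnode k s hs0 (r + m)) :=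
    walk_pow (CycA k s x y) (bnode k s hs0) (fun t => cycA_cyc hs0 x y t)
  obtain ⟨i, hca | hca⟩ := hbig
  · -- some column x i has ≥ 3 ones
    obtain ⟨a, b, c, ha, hb, hc, hab, hbc⟩ := exists_three hca
    have hxb : x i b = 1 := (Finset.mem_filter.mp hb).2
    have hxc : x i c = 1 := (Finset.mem_filter.mp hc).2
    have h2 : 2 ≤ ((CycA k s x y) ^ 2) (tnode k s a) (bnode k s hs0 i.val) := by
      rw [pow_two, Matrix.mul_apply]
      refine two_le_sum _ (tnode k s b) (tnode k s c) ?_ ?_ ?_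
      · intro h
        exact absurd (Fin.ext (by simpa [tnode] using congrArg Fin.val h) : b = c)
          (ne_of_lt hbc)
      · rw [cycA_tt x y a b hab, cycA_tb hs0 x y b i, hxb]; exact Nat.le_refl _
      · rw [cycA_tt x y a c (hab.trans hbc), cycA_tb hs0 x y c i, hxc]; exact Nat.le_refl _
    have hdec : (CycA k s x y) ^ p = (CycA k s x y) ^ 2 * (CycA k s x y) ^ (p - 2) := by
      rw [← pow_add]; congr 1; omega
    have key : 2 ≤ ((CycA k s x y) ^ p) (tnode k s a) (bnode k s hs0 (i.val + (p - 2))) := by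
      rw [hdec, Matrix.mul_apply]
      calc 2 = 2 * 1 := rfl
        _ ≤ ((CycA k s x y) ^ 2) (tnode k s a) (bnode k s hs0 i.val) *
              ((CycA k s x y) ^ (p - 2)) (bnode k s hs0 i.val) (bnode k s hs0 (i.val + (p - 2))) :=
            Nat.mul_le_mul h2 (walk (p - 2) i.val)
        _ ≤ _ := term_le_sum
            (fun t => ((CycA k s x y) ^ 2) (tnode k s a) t *
              ((CycA k s x y) ^ (p - 2)) t (bnode k s hs0 (i.val + (p - 2))))
            (bnode k s hs0 i.val)
    rcases hpow (tnode k s a) (bnode k s hs0 (i.val + (p - 2))) with h | h <;> omega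
  · -- some row y i has ≥ 3 ones
    obtain ⟨a, b, c, ha, hb, hc, hab, hbc⟩ := exists_three hca
    have hya : y i a = 1 := (Finset.mem_filter.mp ha).2
    have hyb : y i b = 1 := (Finset.mem_filter.mp hb).2
    have h2 : 2 ≤ ((CycA k s x y) ^ 2) (bnode k s hs0 i.val) (tnode k s c) := by
      rw [pow_two, Matrix.mul_apply]
      refine two_le_sum _ (tnode k s a) (tnode k s b) ?_ ?_ ?_
      · intro h
        exact absurd (Fin.ext (by simpa [tnode] using congrArg Fin.val h) : a = b)
          (ne_of_lt hab)
      · rw [cycA_bt hs0 x y a i, hya, cycA_tt x y a c (hab.trans hbc)]; exact Nat.le_refl _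
      · rw [cycA_bt hs0 x y b i, hyb, cycA_tt x y b c hbc]; exact Nat.le_refl _
    set m := p - 2 with hm
    set r := i.val + m * s - m with hr
    have hms : m ≤ m * s := Nat.le_mul_of_pos_right m hs0
    have hrm : r + m = i.val + m * s := by omega
    have hb1 : bnode k s hs0 (r + m) = bnode k s hs0 i.val := by
      apply Fin.ext
      show k + (r + m) % s = k + i.val % s
      rw [hrm, Nat.add_mul_mod_self_right]
    have hwalk : 1 ≤ ((CycA k s x y) ^ m) (bnode k s hs0 r) (bnode k s hs0 i.val) := by
      rw [← hb1]; exact walk m r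
    have hdec : (CycA k s x y) ^ p = (CycA k s x y) ^ m * (CycA k s x y) ^ 2 := by
      rw [← pow_add]; congr 1; omega
    have key : 2 ≤ ((CycA k s x y) ^ p) (bnode k s hs0 r) (tnode k s c) := by
      rw [hdec, Matrix.mul_apply]
      calc 2 = 1 * 2 := rfl
        _ ≤ ((CycA k s x y) ^ m) (bnode k s hs0 r) (bnode k s hs0 i.val) *
              ((CycA k s x y) ^ 2) (bnode k s hs0 i.val) (tnode k s c) :=
            Nat.mul_le_mul hwalk h2
        _ ≤ _ := term_le_sum
            (fun t => ((CycA k s x y) ^ m) (bnode k s hs0 r) t *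
              ((CycA k s x y) ^ 2) t (tnode k s c))
            (bnode k s hs0 i.val)
    rcases hpow (bnode k s hs0 r) (tnode k s c) with h | h <;> omega
end

section
/- Let k ≥ 5 be an integer, let x_1, x_2, y_1, y_2 ∈ {0,1}^k, and let A be the (k+2)×(k+2) 0-1 matrix whose top-left k×k block is T_k, whose (k+j)-th column restricted to the first k rows is x_j (j = 1,2), whose (k+j)-th row restricted to the first k columns is y_jᵀ (j = 1,2), and whose bottom-right 2×2 block is [[0,1],[1,0]]. If there exists i ∈ {1,2} such that f(x_i) = 2 and f(y_i) = 2, then A ∉ Γ(k+2, p) for every integer p ≥ 5. -/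
/-- The (k+2)×(k+2) matrix with top-left block `T_k`, bordered columns
`x_1, x_2`, bordered rows `y_1ᵀ, y_2ᵀ`, and bottom-right 2×2 block
`[[0,1],[1,0]]`. -/
def CycA2 (k : ℕ) (x y : Fin 2 → Fin k → ℕ) :
    Matrix (Fin (k + 2)) (Fin (k + 2)) ℕ :=
  fun i j =>
    if hi : (i : ℕ) < k then
      if hj : (j : ℕ) < k then (if (i : ℕ) < (j : ℕ) then 1 else 0)
      else x ⟨(j : ℕ) - k, by have := j.isLt; omega⟩ ⟨i, hi⟩
    else
      if hj : (j : ℕ) < k then y ⟨(i : ℕ) - k, by have := i.isLt; omega⟩ ⟨j, hj⟩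
      else if (i : ℕ) ≠ (j : ℕ) then 1 else 0

/-- One term of the product sum is a lower bound for a matrix product entry. -/
lemma stmt14_mulOne {n : ℕ} (A B : Matrix (Fin n) (Fin n) ℕ) (i j m : Fin n) :
    A i m * B m j ≤ (A * B) i j := by
  rw [Matrix.mul_apply]
  exact Finset.single_le_sum (f := fun t => A i t * B t j) (fun _ _ => Nat.zero_le _)
    (Finset.mem_univ m)

/-- Two distinct terms of the product sum lower-bound a matrix product entry. -/
lemma stmt14_mulTwo {n : ℕ} (A B : Matrix (Fin n) (Fin n) ℕ) (i j m m' : Fin n)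
    (h : m ≠ m') :
    A i m * B m j + A i m' * B m' j ≤ (A * B) i j := by
  rw [Matrix.mul_apply]
  calc A i m * B m j + A i m' * B m' j
      = ∑ t ∈ ({m, m'} : Finset (Fin n)), A i t * B t j :=
        (Finset.sum_pair (f := fun t => A i t * B t j) h).symm
    _ ≤ ∑ t, A i t * B t j := Finset.sum_le_sum_of_subset (Finset.subset_univ _)

/-- Abstract counting lemma: given the walk structure
`aa → bb`, `aa → w`, `bb → w`, `w ↔ w'`, `w → cc`, `w → dd`, `cc → dd`,
the `(aa, dd)` entry of `A ^ p` is at least `2` for `p ≥ 5`. -/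
lemma stmt14_aux {n : ℕ} (A : Matrix (Fin n) (Fin n) ℕ)
    (aa bb cc dd w w' : Fin n) (hwb : w ≠ bb)
    (hAab : A aa bb = 1) (hAaw : A aa w = 1) (hAbw : A bb w = 1)
    (hAwc : A w cc = 1) (hAwd : A w dd = 1) (hAcd : A cc dd = 1)
    (h1 : A w w' = 1) (h2 : A w' w = 1)
    (p : ℕ) (hp : 5 ≤ p) : 2 ≤ (A ^ p) aa dd := by
  have key : ∀ r, 1 ≤ (A ^ (r + 1)) w dd := by
    intro r
    induction r using Nat.strong_induction_on with
    | _ r ih =>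
      rcases r with _ | _ | m
      · simpa [pow_one] using hAwd.ge
      · have s := stmt14_mulOne A A w dd cc
        rw [hAwc, hAcd, one_mul] at s
        calc 1 ≤ (A * A) w dd := s
          _ = (A ^ 2) w dd := by rw [pow_two]
      · have hm : 1 ≤ (A ^ (m + 1)) w dd := ih m (by omega)
        have s1 := stmt14_mulOne A (A ^ (m + 1)) w' dd w
        rw [h2, one_mul] at s1
        have s2 := stmt14_mulOne A (A * A ^ (m + 1)) w dd w'
        rw [h1, one_mul] at s2
        rw [show m + 2 + 1 = (m + 1 + 1) + 1 by omega, pow_succ', pow_succ']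
        exact le_trans (le_trans hm s1) s2
  obtain ⟨q, rfl⟩ : ∃ q, p = q + 5 := ⟨p - 5, by omega⟩
  have hb : 1 ≤ (A ^ (q + 4)) bb dd := by
    rw [show q + 4 = (q + 3) + 1 by omega, pow_succ']
    have s := stmt14_mulOne A (A ^ (q + 3)) bb dd w
    rw [hAbw, one_mul] at s
    exact le_trans (key (q + 2)) s
  have hw : 1 ≤ (A ^ (q + 4)) w dd := key (q + 3)
  rw [show q + 5 = (q + 4) + 1 by omega, pow_succ']
  have s := stmt14_mulTwo A (A ^ (q + 4)) aa dd w bb hwb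
  rw [hAaw, hAab, one_mul, one_mul] at s
  omega

/-- Extract two ordered ones from a 0-1 vector with `fVec = 2`. -/
lemma stmt14_twoOnes {k : ℕ} (v : Fin k → ℕ) (h : fVec v = 2) :
    ∃ a b : Fin k, (a : ℕ) < b ∧ v a = 1 ∧ v b = 1 := by
  have h' : (Finset.univ.filter (fun j => v j = 1)).card = 2 := h
  obtain ⟨a, b, hne, hset⟩ := Finset.card_eq_two.mp h'
  have ha : v a = 1 := by
    have : a ∈ Finset.univ.filter (fun j => v j = 1) := by rw [hset]; simp
    simpa using this
  have hb : v b = 1 := by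
    have : b ∈ Finset.univ.filter (fun j => v j = 1) := by rw [hset]; simp
    simpa using this
  rcases lt_or_gt_of_ne (fun e : (a : ℕ) = b => hne (Fin.ext e)) with hlt | hlt
  · exact ⟨a, b, hlt, ha, hb⟩
  · exact ⟨b, a, hlt, hb, ha⟩


lemma stmt14_block (k : ℕ) (x y : Fin 2 → Fin k → ℕ) (a b : Fin k) (h : (a : ℕ) < (b : ℕ)) :
    CycA2 k x y ⟨a, by have := a.isLt; omega⟩ ⟨b, by have := b.isLt; omega⟩ = 1 := by
  simp [CycA2, a.isLt, b.isLt, h]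

lemma stmt14_col (k : ℕ) (x y : Fin 2 → Fin k → ℕ) (a : Fin k) (i : Fin 2) :
    CycA2 k x y ⟨a, by have := a.isLt; omega⟩ ⟨k + i, by have := i.isLt; omega⟩ = x i a := by
  simp only [CycA2]
  rw [dif_pos a.isLt, dif_neg (by omega)]
  congr 1
  exact Fin.ext (by simp)

lemma stmt14_row (k : ℕ) (x y : Fin 2 → Fin k → ℕ) (c : Fin k) (i : Fin 2) :
    CycA2 k x y ⟨k + i, by have := i.isLt; omega⟩ ⟨c, by have := c.isLt; omega⟩ = y i c := by
  simp only [CycA2]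
  rw [dif_neg (by omega), dif_pos c.isLt]
  congr 1
  exact Fin.ext (by simp)

lemma stmt14_corner (k : ℕ) (x y : Fin 2 → Fin k → ℕ) (s t : ℕ) (hs : s < 2) (ht : t < 2)
    (hst : s ≠ t) :
    CycA2 k x y ⟨k + s, by omega⟩ ⟨k + t, by omega⟩ = 1 := by
  simp only [CycA2]
  rw [dif_neg (by omega), dif_neg (by omega), if_pos (by omega)]

/-- Lemma (ii): for `k ≥ 5`, if for some `i ∈ {1,2}` both
`f(x_i) = 2` and `f(y_i) = 2`, then the above matrix is not in `Γ(k+2, p)`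
for any `p ≥ 5`. -/
theorem stmt14 (k : ℕ) (hk : 5 ≤ k)
    (x y : Fin 2 → Fin k → ℕ)
    (hx : ∀ i j, x i j = 0 ∨ x i j = 1) (hy : ∀ i j, y i j = 0 ∨ y i j = 1)
    (hex : ∃ i : Fin 2, fVec (x i) = 2 ∧ fVec (y i) = 2) :
    ∀ p : ℕ, 5 ≤ p → ¬ Gamma (k + 2) p (CycA2 k x y) := by
  intro p hp hG
  obtain ⟨hA01, hpow⟩ := hG
  obtain ⟨i, hxi, hyi⟩ := hex
  obtain ⟨a, b, hab, hxa, hxb⟩ := stmt14_twoOnes (x i) hxi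
  obtain ⟨c, d, hcd, hyc, hyd⟩ := stmt14_twoOnes (y i) hyi
  have hi2 := i.isLt
  have ha2 := a.isLt
  have hb2 := b.isLt
  have hc2 := c.isLt
  have hd2 := d.isLt
  have main := stmt14_aux (CycA2 k x y)
    ⟨a, by omega⟩ ⟨b, by omega⟩ ⟨c, by omega⟩ ⟨d, by omega⟩
    ⟨k + i, by omega⟩ ⟨k + (1 - (i : ℕ)), by omega⟩
    (by intro e; rw [Fin.mk.injEq] at e; omega)
    (stmt14_block k x y a b hab)
    ((stmt14_col k x y a i).trans hxa)
    ((stmt14_col k x y b i).trans hxb)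
    ((stmt14_row k x y c i).trans hyc)
    ((stmt14_row k x y d i).trans hyd)
    (stmt14_block k x y c d hcd)
    (stmt14_corner k x y i (1 - (i : ℕ)) hi2 (by omega) (by omega))
    (stmt14_corner k x y (1 - (i : ℕ)) i (by omega) hi2 (by omega))
    p hp
  have := hpow ⟨a, by omega⟩ ⟨d, by omega⟩
  omega
end

section
/- Let t ≥ 2 be an integer and let A be the 3t×3t 0-1 matrix written in t×t blocks of size 3×3 in which the block in position (1,2) equals T'_3 and every other block equals T_3, where T'_3 = [[0,1,1],[0,1,1],[0,0,0]] and T_3 = [[0,1,1],[0,0,1],[0,0,0]]. Then the (i,j)-entry of A^3 equals 1 if i ≡ 1 (mod 3) and j ≡ 0 (mod 3), and equals 0 otherwise; in particular A ∈ Γ(3t, 3), and f(A) = 3t² + 1 > 3t² = f(Π_{t,3}). Consequently, the maximum of f(B) over B ∈ Γ(3t,3) is strictly greater than f(Π_{t,3}). -/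
/-- `Π_{m,n} = J_m ⊗ T_n`, with flat indices: `(i,j)` entry is `1` iff
`i mod n < j mod n`. -/
def PiMat (m n : ℕ) : Matrix (Fin (m * n)) (Fin (m * n)) ℕ :=
  fun i j => if (i : ℕ) % n < (j : ℕ) % n then 1 else 0

/-- The 3t×3t matrix made of t×t blocks of size 3×3, in which the (1,2)-block
is `T'_3 = [[0,1,1],[0,1,1],[0,0,0]]` and every other block is
`T_3 = [[0,1,1],[0,0,1],[0,0,0]]`. -/
def Amat19 (t : ℕ) : Matrix (Fin (3 * t)) (Fin (3 * t)) ℕ :=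
  fun i j =>
    if (i : ℕ) / 3 = 0 ∧ (j : ℕ) / 3 = 1 then
      (if (i : ℕ) % 3 ≤ 1 ∧ 1 ≤ (j : ℕ) % 3 then 1 else 0)
    else (if (i : ℕ) % 3 < (j : ℕ) % 3 then 1 else 0)



lemma Amat19_eq (t : ℕ) (i j : Fin (3*t)) :
    Amat19 t i j = (if (i:ℕ) % 3 < (j:ℕ) % 3 then 1 else 0)
      + (if (i:ℕ) = 1 ∧ (j:ℕ) = 4 then 1 else 0) := by
  unfold Amat19
  split_ifs <;> omega

lemma sum_range_mod3 (g : ℕ → ℕ) (t : ℕ) :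
    ∑ k ∈ Finset.range (3 * t), g (k % 3) = t * (g 0 + g 1 + g 2) := by
  induction t with
  | zero => simp
  | succ t ih =>
    rw [show 3 * (t+1) = (3*t + 1 + 1) + 1 by ring, Finset.sum_range_succ,
        Finset.sum_range_succ, Finset.sum_range_succ, ih,
        show (3*t) % 3 = 0 by omega, show (3*t+1) % 3 = 1 by omega,
        show (3*t+1+1) % 3 = 2 by omega]
    ring

lemma sum_fin_mod3 {n : ℕ} (t : ℕ) (hn : n = 3 * t) (g : ℕ → ℕ) :
    ∑ k : Fin n, g ((k:ℕ) % 3) = t * (g 0 + g 1 + g 2) := by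
  subst hn
  rw [Fin.sum_univ_eq_sum_range (fun k => g (k % 3)) (3*t)]
  exact sum_range_mod3 g t

lemma sum_single_val {n : ℕ} (c : ℕ) (hc : c < n) (f : Fin n → ℕ) :
    ∑ k : Fin n, (if (k:ℕ) = c then f k else 0) = f ⟨c, hc⟩ := by
  have h : ∀ k : Fin n, ((k:ℕ) = c) ↔ (k = ⟨c, hc⟩) := fun k => by
    constructor
    · intro h; exact Fin.ext h
    · intro h; subst h; rfl
  calc ∑ k : Fin n, (if (k:ℕ) = c then f k else 0)
      = ∑ k : Fin n, (if k = ⟨c,hc⟩ then f k else 0) :=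
        Finset.sum_congr rfl (fun k _ => if_congr (h k) rfl rfl)
    _ = f ⟨c,hc⟩ := by rw [Finset.sum_ite_eq']; simp

lemma Amat19_sq (t : ℕ) (ht : 2 ≤ t) (i j : Fin (3*t)) :
    (Amat19 t * Amat19 t) i j =
      t * (if (i:ℕ)%3 = 0 ∧ (j:ℕ)%3 = 2 then 1 else 0)
      + (if (i:ℕ)%3 = 0 ∧ (j:ℕ) = 4 then 1 else 0)
      + (if (i:ℕ) = 1 ∧ (j:ℕ)%3 = 2 then 1 else 0) := by
  have h4 : 4 < 3*t := by omega
  have h1 : 1 < 3*t := by omega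
  rw [Matrix.mul_apply]
  have key : ∀ k : Fin (3*t), Amat19 t i k * Amat19 t k j =
      (if (i:ℕ)%3 < (k:ℕ)%3 ∧ (k:ℕ)%3 < (j:ℕ)%3 then 1 else 0)
      + ((if (k:ℕ) = 1 then (if (i:ℕ)%3 = 0 ∧ (j:ℕ) = 4 then 1 else 0) else 0)
      + (if (k:ℕ) = 4 then (if (i:ℕ) = 1 ∧ (j:ℕ)%3 = 2 then 1 else 0) else 0)) := by
    intro k
    rw [Amat19_eq, Amat19_eq]
    split_ifs <;> omega
  calc (∑ k : Fin (3*t), Amat19 t i k * Amat19 t k j)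
      = ∑ k : Fin (3*t),
        ((if (i:ℕ)%3 < (k:ℕ)%3 ∧ (k:ℕ)%3 < (j:ℕ)%3 then 1 else 0)
        + ((if (k:ℕ) = 1 then (if (i:ℕ)%3 = 0 ∧ (j:ℕ) = 4 then 1 else 0) else 0)
        + (if (k:ℕ) = 4 then (if (i:ℕ) = 1 ∧ (j:ℕ)%3 = 2 then 1 else 0) else 0))) :=
        Finset.sum_congr rfl (fun k _ => key k)
    _ = (∑ k : Fin (3*t), (if (i:ℕ)%3 < (k:ℕ)%3 ∧ (k:ℕ)%3 < (j:ℕ)%3 then 1 else 0))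
        + ((∑ k : Fin (3*t), (if (k:ℕ) = 1 then (if (i:ℕ)%3 = 0 ∧ (j:ℕ) = 4 then 1 else 0) else 0))
        + (∑ k : Fin (3*t), (if (k:ℕ) = 4 then (if (i:ℕ) = 1 ∧ (j:ℕ)%3 = 2 then 1 else 0) else 0))) := by
        rw [Finset.sum_add_distrib, Finset.sum_add_distrib]
    _ = t * (if (i:ℕ)%3 = 0 ∧ (j:ℕ)%3 = 2 then 1 else 0)
        + (if (i:ℕ)%3 = 0 ∧ (j:ℕ) = 4 then 1 else 0)
        + (if (i:ℕ) = 1 ∧ (j:ℕ)%3 = 2 then 1 else 0) := by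
        rw [sum_single_val 1 h1, sum_single_val 4 h4,
          sum_fin_mod3 t rfl (fun r => if (i:ℕ)%3 < r ∧ r < (j:ℕ)%3 then 1 else 0)]
        have : ((if (i:ℕ)%3 < 0 ∧ 0 < (j:ℕ)%3 then 1 else 0)
            + (if (i:ℕ)%3 < 1 ∧ 1 < (j:ℕ)%3 then 1 else 0)
            + (if (i:ℕ)%3 < 2 ∧ 2 < (j:ℕ)%3 then 1 else 0))
            = (if (i:ℕ)%3 = 0 ∧ (j:ℕ)%3 = 2 then 1 else 0) := by
          split_ifs <;> omega
        rw [this]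
        ring

lemma Amat19_cube (t : ℕ) (ht : 2 ≤ t) (i j : Fin (3*t)) :
    (Amat19 t ^ 3) i j = if (i:ℕ)%3 = 0 ∧ (j:ℕ)%3 = 2 then 1 else 0 := by
  have h4 : 4 < 3*t := by omega
  have hpow : Amat19 t ^ 3 = (Amat19 t * Amat19 t) * Amat19 t := by
    rw [pow_succ, pow_succ, pow_one]
  rw [hpow, Matrix.mul_apply]
  have key : ∀ k : Fin (3*t), (Amat19 t * Amat19 t) i k * Amat19 t k j =
      if (k:ℕ) = 4 then (if (i:ℕ)%3 = 0 ∧ (j:ℕ)%3 = 2 then 1 else 0) else 0 := by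
    intro k
    rw [Amat19_sq t ht, Amat19_eq]
    split_ifs <;> omega
  calc (∑ k : Fin (3*t), (Amat19 t * Amat19 t) i k * Amat19 t k j)
      = ∑ k : Fin (3*t),
          (if (k:ℕ) = 4 then (if (i:ℕ)%3 = 0 ∧ (j:ℕ)%3 = 2 then 1 else 0) else 0) :=
        Finset.sum_congr rfl (fun k _ => key k)
    _ = if (i:ℕ)%3 = 0 ∧ (j:ℕ)%3 = 2 then 1 else 0 :=
        sum_single_val 4 h4 (fun _ => if (i:ℕ)%3 = 0 ∧ (j:ℕ)%3 = 2 then 1 else 0)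

lemma count_lt_mod3 {n : ℕ} (t : ℕ) (hn : n = 3*t) :
    (∑ i : Fin n, ∑ j : Fin n, if (i:ℕ)%3 < (j:ℕ)%3 then (1:ℕ) else 0) = 3 * t^2 := by
  have inner : ∀ i : Fin n, (∑ j : Fin n, if (i:ℕ)%3 < (j:ℕ)%3 then (1:ℕ) else 0)
      = t * ((if (i:ℕ)%3 < 0 then 1 else 0) + (if (i:ℕ)%3 < 1 then 1 else 0)
        + (if (i:ℕ)%3 < 2 then 1 else 0)) :=
    fun i => sum_fin_mod3 t hn (fun r => if (i:ℕ)%3 < r then 1 else 0)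
  calc (∑ i : Fin n, ∑ j : Fin n, if (i:ℕ)%3 < (j:ℕ)%3 then (1:ℕ) else 0)
      = ∑ i : Fin n, t * ((if (i:ℕ)%3 < 0 then 1 else 0) + (if (i:ℕ)%3 < 1 then 1 else 0)
          + (if (i:ℕ)%3 < 2 then 1 else 0)) := Finset.sum_congr rfl (fun i _ => inner i)
    _ = t * (t * ((if 0 < 0 then 1 else 0) + (if (0:ℕ) < 1 then 1 else 0) + (if (0:ℕ) < 2 then 1 else 0))
          + t * ((if 1 < 0 then 1 else 0) + (if (1:ℕ) < 1 then 1 else 0) + (if (1:ℕ) < 2 then 1 else 0))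
          + t * ((if 2 < 0 then 1 else 0) + (if (2:ℕ) < 1 then 1 else 0) + (if (2:ℕ) < 2 then 1 else 0))) :=
        sum_fin_mod3 t hn (fun r => t * ((if r < 0 then 1 else 0) + (if r < 1 then 1 else 0)
          + (if r < 2 then 1 else 0)))
    _ = 3 * t^2 := by norm_num; ring



lemma fOnes_Amat19 (t : ℕ) (ht : 2 ≤ t) : fOnes (Amat19 t) = 3 * t^2 + 1 := by
  have h1 : 1 < 3*t := by omega
  have h4 : 4 < 3*t := by omega
  unfold fOnes
  rw [Finset.card_filter, Fintype.sum_prod_type]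
  have key : ∀ i j : Fin (3*t), (if Amat19 t i j = 1 then (1:ℕ) else 0) =
      (if (i:ℕ)%3 < (j:ℕ)%3 then 1 else 0)
      + (if (i:ℕ) = 1 then (if (j:ℕ) = 4 then 1 else 0) else 0) := by
    intro i j; rw [Amat19_eq]; split_ifs <;> omega
  calc (∑ i : Fin (3*t), ∑ j : Fin (3*t), if Amat19 t i j = 1 then (1:ℕ) else 0)
      = ∑ i : Fin (3*t), ∑ j : Fin (3*t),
          ((if (i:ℕ)%3 < (j:ℕ)%3 then (1:ℕ) else 0)
          + (if (i:ℕ) = 1 then (if (j:ℕ) = 4 then 1 else 0) else 0)) :=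
        Finset.sum_congr rfl (fun i _ => Finset.sum_congr rfl (fun j _ => key i j))
    _ = (∑ i : Fin (3*t), ∑ j : Fin (3*t), (if (i:ℕ)%3 < (j:ℕ)%3 then (1:ℕ) else 0))
        + (∑ i : Fin (3*t), ∑ j : Fin (3*t),
            (if (i:ℕ) = 1 then (if (j:ℕ) = 4 then (1:ℕ) else 0) else 0)) := by
        rw [← Finset.sum_add_distrib]
        exact Finset.sum_congr rfl (fun i _ => Finset.sum_add_distrib)
    _ = 3 * t^2 + 1 := by
        rw [count_lt_mod3 t rfl]
        congr 1
        have inner : ∀ i : Fin (3*t),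
            (∑ j : Fin (3*t), (if (i:ℕ) = 1 then (if (j:ℕ) = 4 then (1:ℕ) else 0) else 0))
            = if (i:ℕ) = 1 then 1 else 0 := by
          intro i
          by_cases hi : (i:ℕ) = 1
          · simp only [hi, if_pos rfl]
            exact sum_single_val 4 h4 (fun _ => 1)
          · simp [hi]
        rw [Finset.sum_congr rfl (fun i _ => inner i)]
        exact sum_single_val 1 h1 (fun _ => 1)

lemma fOnes_PiMat (t : ℕ) : fOnes (PiMat t 3) = 3 * t^2 := by
  unfold fOnes
  rw [Finset.card_filter, Fintype.sum_prod_type]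
  have key : ∀ i j : Fin (t*3), (if PiMat t 3 i j = 1 then (1:ℕ) else 0)
      = if (i:ℕ)%3 < (j:ℕ)%3 then 1 else 0 := by
    intro i j
    by_cases h : (i:ℕ)%3 < (j:ℕ)%3 <;> simp [PiMat, h]
  rw [Finset.sum_congr rfl (fun i _ => Finset.sum_congr rfl (fun j _ => key i j))]
  exact count_lt_mod3 t (mul_comm t 3)

/-- for `t ≥ 2`, the (i,j)-entry of `A^3` is 1 iff `i ≡ 1` and
`j ≡ 0 (mod 3)` (1-indexed; with 0-indexing, `i % 3 = 0` and `j % 3 = 2`),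
so `A ∈ Γ(3t,3)`; moreover `f(A) = 3t²+1 > 3t² = f(Π_{t,3})`, so the maximum
of `f` over `Γ(3t,3)` is strictly greater than `f(Π_{t,3})`. -/
theorem stmt19 (t : ℕ) (ht : 2 ≤ t) :
    (∀ i j : Fin (3 * t), ((Amat19 t) ^ 3) i j =
      if (i : ℕ) % 3 = 0 ∧ (j : ℕ) % 3 = 2 then 1 else 0) ∧
    Gamma (3 * t) 3 (Amat19 t) ∧
    fOnes (Amat19 t) = 3 * t ^ 2 + 1 ∧
    fOnes (PiMat t 3) = 3 * t ^ 2 ∧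
    fOnes (PiMat t 3) < fOnes (Amat19 t) ∧
    (∃ B : Matrix (Fin (3 * t)) (Fin (3 * t)) ℕ,
      Gamma (3 * t) 3 B ∧ fOnes (PiMat t 3) < fOnes B) := by
  have hcube : ∀ i j : Fin (3*t), ((Amat19 t) ^ 3) i j =
      if (i:ℕ)%3 = 0 ∧ (j:ℕ)%3 = 2 then 1 else 0 := Amat19_cube t ht
  have hgamma : Gamma (3*t) 3 (Amat19 t) := by
    constructor
    · intro i j
      rw [Amat19_eq]
      split_ifs <;> omega
    · intro i j
      rw [hcube]
      split_ifs <;> omega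
  have hlt : fOnes (PiMat t 3) < fOnes (Amat19 t) := by
    rw [fOnes_Amat19 t ht, fOnes_PiMat t]; omega
  exact ⟨hcube, hgamma, fOnes_Amat19 t ht, fOnes_PiMat t, hlt, Amat19 t, hgamma, hlt⟩
end
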